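/- arXiv:1205.6729 — 8 statements merged into one kernel-verified Lean document; each statement's English description precedes it below -/
import Mathlib

section
/- Let X be a Tychonoff space and let C be a nonempty compact subset of βX\X. Let T be the quotient space obtained from βX by contracting C to a single point p. Then the subspace Y = X ∪ {p} of T is Tychonoff, and T is the Stone–Čech compactification of Y; that is, T is a compact Hausdorff space containing Y densely such that every continuous function Y → [0,1] extends continuously over T. -/
open Set Topology Filter

universe u

lemma completelyRegular_subtype {Z : Type*} [TopologicalSpace Z] [CompletelyRegularSpace Z]
    (s : Set Z) : CompletelyRegularSpace s := by
  constructor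
  intro x K hK hxK
  obtain ⟨K', hK', rfl⟩ := isClosed_induced_iff.mp hK
  have hx' : (x : Z) ∉ K' := hxK
  obtain ⟨f, hf, hfx, hfK⟩ := CompletelyRegularSpace.completely_regular (x : Z) K' hK' hx'
  exact ⟨f ∘ Subtype.val, hf.comp continuous_subtype_val, hfx,
    fun k hk => hfK hk⟩

/-- Let `X` be a Tychonoff space and let `C` be a nonempty compact subset of
`βX \ X`. Let `T` be the quotient space obtained from `βX` by contracting `C` to a single
point `p`. Then the subspace `Y = X ∪ {p}` of `T` is Tychonoff, and `T` is the Stone–Čech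
compactification of `Y`: `T` is a compact Hausdorff space containing `Y` densely such that
every continuous function `Y → [0,1]` extends continuously over `T`. -/
theorem stmt0 {X : Type u} [TopologicalSpace X] [T35Space X]
    (C : Set (StoneCech X)) (hC_compact : IsCompact C) (hC_ne : C.Nonempty)
    (hC_out : C ∩ Set.range (stoneCechUnit : X → StoneCech X) = ∅)
    -- `r` is the relation contracting `C` to a point; `T = Quot r` carries the
    -- quotient topology
    (r : StoneCech X → StoneCech X → Prop)
    (hr : ∀ a b, r a b ↔ a = b ∨ (a ∈ C ∧ b ∈ C))
    -- `p` is the point of `T` to which `C` is contracted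
    (c : StoneCech X) (hc : c ∈ C)
    -- `Y = X ∪ {p}`, as a subspace of `T`
    (Y : Set (Quot r))
    (hY : Y = Quot.mk r '' Set.range (stoneCechUnit : X → StoneCech X) ∪ {Quot.mk r c}) :
    T35Space Y ∧
    CompactSpace (Quot r) ∧ T2Space (Quot r) ∧ Dense Y ∧
    (∀ h : Y → unitInterval, Continuous h →
      ∃ H : Quot r → unitInterval, Continuous H ∧ ∀ y : Y, H ↑y = h y) := by
  classical
  have hπcont : Continuous (Quot.mk r) := continuous_quot_mk
  -- relating equal quotient classes
  have hr_of_eq : ∀ a b : StoneCech X, Quot.mk r a = Quot.mk r b →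
      a = b ∨ (a ∈ C ∧ b ∈ C) := by
    intro a b hab
    have h := Quot.eqvGen_exact hab
    clear hab
    induction h with
    | rel x y hxy => exact (hr x y).mp hxy
    | refl x => exact Or.inl rfl
    | symm x y _ ih =>
        rcases ih with rfl | ⟨h1, h2⟩
        · exact Or.inl rfl
        · exact Or.inr ⟨h2, h1⟩
    | trans x y z _ _ ih1 ih2 =>
        rcases ih1 with rfl | ⟨h1, h2⟩
        · exact ih2
        · rcases ih2 with rfl | ⟨h3, h4⟩
          · exact Or.inr ⟨h1, h2⟩
          · exact Or.inr ⟨h1, h4⟩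
  -- saturated open sets have open images
  have himg : ∀ U : Set (StoneCech X), IsOpen U → (C ⊆ U ∨ U ∩ C = ∅) →
      IsOpen (Quot.mk r '' U) := by
    intro U hU hsat
    have hpre : Quot.mk r ⁻¹' (Quot.mk r '' U) = U := by
      ext a
      simp only [mem_preimage, mem_image]
      constructor
      · rintro ⟨b, hbU, hba⟩
        rcases hr_of_eq b a hba with rfl | ⟨hbC, haC⟩
        · exact hbU
        · rcases hsat with hs | hs
          · exact hs haC
          · exact absurd (show b ∈ U ∩ C from ⟨hbU, hbC⟩) (by rw [hs]; exact notMem_empty b)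
      · intro ha; exact ⟨a, ha, rfl⟩
    exact isQuotientMap_quot_mk.isOpen_preimage.mp (by rwa [hpre])
  -- disjointness of images
  have disj_img : ∀ U V : Set (StoneCech X), Disjoint U V →
      (U ∩ C = ∅ ∨ V ∩ C = ∅) → Disjoint (Quot.mk r '' U) (Quot.mk r '' V) := by
    intro U V hUV hsat
    rw [Set.disjoint_left]
    rintro q ⟨u, hu, rfl⟩ ⟨v, hv, heq⟩
    rcases hr_of_eq v u heq with rfl | ⟨hvC, huC⟩
    · exact (Set.disjoint_left.mp hUV hu) hv
    · rcases hsat with hs | hs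
      · exact absurd (show u ∈ U ∩ C from ⟨hu, huC⟩) (by rw [hs]; exact notMem_empty u)
      · exact absurd (show v ∈ V ∩ C from ⟨hv, hvC⟩) (by rw [hs]; exact notMem_empty v)
  have hCcl : IsClosed C := hC_compact.isClosed
  -- Hausdorffness of the quotient
  have hT2 : T2Space (Quot r) := by
    constructor
    intro x y hxy
    obtain ⟨a, rfl⟩ := Quot.exists_rep x
    obtain ⟨b, rfl⟩ := Quot.exists_rep y
    have hkey : ∀ a b : StoneCech X, a ∈ C → b ∉ C →
        ∃ u v : Set (Quot r), IsOpen u ∧ IsOpen v ∧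
          Quot.mk r a ∈ u ∧ Quot.mk r b ∈ v ∧ Disjoint u v := by
      intro a b ha hb
      obtain ⟨U, V, hUo, hVo, hCU, hbV, hUV⟩ :=
        SeparatedNhds.of_isCompact_isCompact hC_compact isCompact_singleton
          (by rwa [Set.disjoint_singleton_right])
      have hVC : V ∩ C = ∅ := by
        apply Set.eq_empty_of_forall_notMem
        rintro z ⟨hzV, hzC⟩
        exact (Set.disjoint_left.mp hUV (hCU hzC)) hzV
      exact ⟨Quot.mk r '' U, Quot.mk r '' V, himg U hUo (Or.inl hCU), himg V hVo (Or.inr hVC),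
        ⟨a, hCU ha, rfl⟩, ⟨b, hbV rfl, rfl⟩,
        disj_img U V hUV.symm.symm (Or.inr hVC)⟩
    by_cases ha : a ∈ C
    · by_cases hb : b ∈ C
      · exact absurd (Quot.sound ((hr a b).mpr (Or.inr ⟨ha, hb⟩))) hxy
      · exact hkey a b ha hb
    · by_cases hb : b ∈ C
      · obtain ⟨u, v, huo, hvo, hbu, hav, huv⟩ := hkey b a hb ha
        exact ⟨v, u, hvo, huo, hav, hbu, huv.symm⟩
      · obtain ⟨U, V, hUo, hVo, haU, hbV, hUV⟩ := t2_separation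
          (show a ≠ b by rintro rfl; exact hxy rfl)
        have hU'C : (U ∩ Cᶜ) ∩ C = ∅ := by
          apply Set.eq_empty_of_forall_notMem
          rintro z ⟨⟨_, hz⟩, hzC⟩
          exact hz hzC
        have hV'C : (V ∩ Cᶜ) ∩ C = ∅ := by
          apply Set.eq_empty_of_forall_notMem
          rintro z ⟨⟨_, hz⟩, hzC⟩
          exact hz hzC
        refine ⟨Quot.mk r '' (U ∩ Cᶜ), Quot.mk r '' (V ∩ Cᶜ),
          himg _ (hUo.inter hCcl.isOpen_compl) (Or.inr hU'C),
          himg _ (hVo.inter hCcl.isOpen_compl) (Or.inr hV'C),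
          ⟨a, ⟨haU, ha⟩, rfl⟩, ⟨b, ⟨hbV, hb⟩, rfl⟩,
          disj_img _ _ (hUV.mono inter_subset_left inter_subset_left) (Or.inl hU'C)⟩
  have hdense : Dense Y := by
    have hdr : DenseRange (Quot.mk r ∘ stoneCechUnit) :=
      ((Quot.mk_surjective (r := r)).denseRange).comp denseRange_stoneCechUnit hπcont
    have hsub : Set.range (Quot.mk r ∘ stoneCechUnit) ⊆ Y := by
      rw [hY, Set.range_comp]
      exact subset_union_left
    exact hdr.mono hsub
  haveI : T2Space (Quot r) := hT2
  haveI : T35Space (Quot r) := inferInstance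
  haveI : CompletelyRegularSpace Y := completelyRegular_subtype Y
  refine ⟨{}, inferInstance, hT2, hdense, ?_⟩
  intro h hcont
  have hpY : Quot.mk r c ∈ Y := by rw [hY]; exact Or.inr rfl
  have hmemY : ∀ x : X, Quot.mk r (stoneCechUnit x) ∈ Y := fun x => by
    rw [hY]; exact Or.inl ⟨_, mem_range_self x, rfl⟩
  set p : Y := ⟨Quot.mk r c, hpY⟩ with hp
  set k : X → Y := fun x => ⟨Quot.mk r (stoneCechUnit x), hmemY x⟩ with hkdef
  have hk : Continuous k := (hπcont.comp continuous_stoneCechUnit).subtype_mk _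
  have hg : Continuous (h ∘ k) := hcont.comp hk
  have hGcont : Continuous (stoneCechExtend hg) := continuous_stoneCechExtend hg
  have hGext : stoneCechExtend hg ∘ stoneCechUnit = h ∘ k := stoneCechExtend_extends hg
  -- the extension is constant on C, with value h p
  have hGC : ∀ z ∈ C, stoneCechExtend hg z = h p := by
    intro z hz
    set F : Filter X := comap stoneCechUnit (𝓝 z) with hF
    have hne : NeBot F := by
      rw [hF, comap_neBot_iff]
      intro t ht
      obtain ⟨w, hwt, x, rfl⟩ := mem_closure_iff_nhds.mp (denseRange_stoneCechUnit z) t ht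
      exact ⟨x, hwt⟩
    have h1 : Tendsto stoneCechUnit F (𝓝 z) := tendsto_comap
    have h2 : Tendsto (h ∘ k) F (𝓝 (stoneCechExtend hg z)) := by
      have := ((hGcont.tendsto z).comp h1 : Tendsto (stoneCechExtend hg ∘ stoneCechUnit) F _)
      rwa [hGext] at this
    have h3 : Tendsto k F (𝓝 p) := by
      rw [tendsto_subtype_rng]
      have hπz : Quot.mk r z = Quot.mk r c := Quot.sound ((hr z c).mpr (Or.inr ⟨hz, hc⟩))
      have := ((hπcont.tendsto z).comp h1 : Tendsto (fun x => Quot.mk r (stoneCechUnit x)) F _)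
      rw [hπz] at this
      exact this
    have h4 : Tendsto (h ∘ k) F (𝓝 (h p)) := (hcont.tendsto p).comp h3
    exact tendsto_nhds_unique h2 h4
  have hGconst : ∀ a b, r a b → stoneCechExtend hg a = stoneCechExtend hg b := by
    intro a b hab
    rcases (hr a b).mp hab with rfl | ⟨ha, hb⟩
    · rfl
    · rw [hGC a ha, hGC b hb]
  refine ⟨Quot.lift (stoneCechExtend hg) hGconst,
    continuous_quot_lift hGconst hGcont, ?_⟩
  rintro ⟨y, hy⟩
  rw [hY] at hy
  rcases hy with ⟨w, ⟨x, rfl⟩, rfl⟩ | hy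
  · show stoneCechExtend hg (stoneCechUnit x) = _
    have hx : stoneCechExtend hg (stoneCechUnit x) = (h ∘ k) x := congrFun hGext x
    rw [hx]
    rfl
  · have : y = Quot.mk r c := hy
    subst this
    show stoneCechExtend hg c = _
    rw [hGC c hc]
end

section
/- Let X be a Tychonoff space and let Y₁ and Y₂ be one-point Tychonoff extensions of X, with τᵢ : βX → βYᵢ the unique continuous extension of the identity map of X (i = 1, 2). Then Y₁ ≤ Y₂ (that is, there is a continuous map from Y₂ into Y₁ fixing X pointwise) if and only if τ₂⁻¹(Y₂\X) ⊆ τ₁⁻¹(Y₁\X). -/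
/-!
A continuous `f : Y₂ → Y₁` fixing `X` must send the remainder point `p₂` to `p₁`, and then its
Stone–Čech extension `βf` satisfies `βf ∘ τ₂ = τ₁`, which gives the inclusion of fibres.

Conversely, `ι₁` extends continuously along the dense embedding `ι₂` as soon as `ι₁(x) → p₁`
whenever `ι₂(x) → p₂`, i.e. as soon as `p₂ ∈ cl (ι₂ B)` forces `p₁ ∈ cl (ι₁ B)` for all `B ⊆ X`.
If `p₂ ∈ cl (ι₂ B)`, compactness of `βX` yields `z ∈ cl_{βX} B` with `τ₂ z = p₂`; then
`τ₁ z = p₁` lies in `cl_{βY₁} (ι₁ B)`, and since `Y₁` is Tychonoff, `Y₁` carries the subspace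
topology of `βY₁`, so `p₁ ∈ cl (ι₁ B)`.
-/

open Set Topology Filter

universe u

theorem Filter.comap_nhds_le_comap_nhds_of_mem_closure_image {α β γ : Type*}
    [TopologicalSpace β] [TopologicalSpace γ] {g : α → β} {h : α → γ} {b : β} {c : γ}
    (H : ∀ s : Set α, b ∈ closure (g '' s) → c ∈ closure (h '' s)) :
    comap g (𝓝 b) ≤ comap h (𝓝 c) := by
  intro s hs
  rw [mem_comap_iff_compl, ← mem_interior_iff_mem_nhds, interior_compl] at hs ⊢
  exact mt (H sᶜ) hs

lemma stoneCechUnit_mem_closure_image_iff {Y : Type*} [TopologicalSpace Y] [T35Space Y]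
    {C : Set Y} {p : Y} : stoneCechUnit p ∈ closure (stoneCechUnit '' C) ↔ p ∈ closure C := by
  rw [(isEmbedding_stoneCechUnit (X := Y)).closure_eq_preimage_closure_image C, mem_preimage]

section Extensions

variable {X Y Y₁ Y₂ : Type*} [TopologicalSpace X] [TopologicalSpace Y]
  [TopologicalSpace Y₁] [TopologicalSpace Y₂]

lemma exists_mem_closure_stoneCechUnit_image {ι : X → Y} {τ : StoneCech X → StoneCech Y}
    (hτ : Continuous τ) (hext : ∀ x, τ (stoneCechUnit x) = stoneCechUnit (ι x))
    {B : Set X} {y : Y} (hy : y ∈ closure (ι '' B)) :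
    ∃ z ∈ closure (stoneCechUnit '' B), τ z = stoneCechUnit y := by
  have hunit : stoneCechUnit y ∈ closure (stoneCechUnit '' (ι '' B)) :=
    mem_closure_image continuous_stoneCechUnit.continuousAt hy
  have himage : stoneCechUnit '' (ι '' B) = τ '' (stoneCechUnit '' B) := by
    simp only [image_image, hext]
  rwa [himage, hτ.isClosedMap.closure_image_eq_of_continuous hτ] at hunit

lemma apply_notMem_range_of_comp_eq [T2Space Y₂] {ι₁ : X → Y₁} {ι₂ : X → Y₂}
    (hι₁ : IsEmbedding ι₁) (hι₂ : IsDenseInducing ι₂) {f : Y₂ → Y₁} (hf : Continuous f)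
    (hfι : ∀ x, f (ι₂ x) = ι₁ x) {y : Y₂} (hy : y ∉ range ι₂) : f y ∉ range ι₁ := by
  rintro ⟨x, hx⟩
  have := hι₂.comap_nhds_neBot y
  have hι₂y : Tendsto ι₂ (comap ι₂ (𝓝 y)) (𝓝 y) := tendsto_comap
  have hι₁x : Tendsto ι₁ (comap ι₂ (𝓝 y)) (𝓝 (ι₁ x)) :=
    hx ▸ ((hf.tendsto y).comp hι₂y).congr hfι
  have hx' : comap ι₂ (𝓝 y) ≤ 𝓝 x := hι₁.tendsto_nhds_iff.mpr hι₁x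
  exact hy ⟨x, tendsto_nhds_unique ((hι₂.continuous.tendsto x).mono_left hx') hι₂y⟩

lemma stoneCechExtend_comp_eq {ι₁ : X → Y₁} {ι₂ : X → Y₂}
    {τ₁ : StoneCech X → StoneCech Y₁} (hτ₁ : Continuous τ₁)
    (hext₁ : ∀ x, τ₁ (stoneCechUnit x) = stoneCechUnit (ι₁ x))
    {τ₂ : StoneCech X → StoneCech Y₂} (hτ₂ : Continuous τ₂)
    (hext₂ : ∀ x, τ₂ (stoneCechUnit x) = stoneCechUnit (ι₂ x))
    {f : Y₂ → Y₁} (hf : Continuous f) (hfι : ∀ x, f (ι₂ x) = ι₁ x) :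
    stoneCechExtend (continuous_stoneCechUnit.comp hf) ∘ τ₂ = τ₁ := by
  refine stoneCech_hom_ext ((continuous_stoneCechExtend _).comp hτ₂) hτ₁ (funext fun x => ?_)
  simp only [Function.comp_apply, hext₂, hext₁, stoneCechExtend_stoneCechUnit, hfι]

lemma mem_closure_image_of_preimage_subset [T35Space Y₁] {ι₁ : X → Y₁} {ι₂ : X → Y₂}
    {τ₁ : StoneCech X → StoneCech Y₁} (hτ₁ : Continuous τ₁)
    (hext₁ : ∀ x, τ₁ (stoneCechUnit x) = stoneCechUnit (ι₁ x))
    {τ₂ : StoneCech X → StoneCech Y₂} (hτ₂ : Continuous τ₂)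
    (hext₂ : ∀ x, τ₂ (stoneCechUnit x) = stoneCechUnit (ι₂ x)) {p₁ : Y₁} {p₂ : Y₂}
    (H : τ₂ ⁻¹' {stoneCechUnit p₂} ⊆ τ₁ ⁻¹' {stoneCechUnit p₁})
    {B : Set X} (hB : p₂ ∈ closure (ι₂ '' B)) : p₁ ∈ closure (ι₁ '' B) := by
  obtain ⟨z, hzB, hz⟩ := exists_mem_closure_stoneCechUnit_image hτ₂ hext₂ hB
  have hτ₁z : τ₁ z ∈ closure (τ₁ '' (stoneCechUnit '' B)) := mem_closure_image hτ₁.continuousAt hzB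
  have himage : τ₁ '' (stoneCechUnit '' B) = stoneCechUnit '' (ι₁ '' B) := by
    simp only [image_image, hext₁]
  rw [himage, show τ₁ z = stoneCechUnit p₁ from H hz] at hτ₁z
  exact stoneCechUnit_mem_closure_image_iff.mp hτ₁z

end Extensions

theorem stmt1_general {X : Type u} [TopologicalSpace X]
    -- `Y₁` is a one-point Tychonoff extension of `X`, with remainder point `p₁`
    (Y1 : Type u) [TopologicalSpace Y1] [T35Space Y1]
    (ι1 : X → Y1) (hemb1 : Topology.IsEmbedding ι1)
    (p1 : Y1) (hp1 : Set.range ι1 = {p1}ᶜ)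
    -- `Y₂` is a one-point Tychonoff extension of `X`, with remainder point `p₂`
    (Y2 : Type u) [TopologicalSpace Y2] [T35Space Y2]
    (ι2 : X → Y2) (hemb2 : Topology.IsEmbedding ι2) (hdense2 : DenseRange ι2)
    (p2 : Y2) (hp2 : Set.range ι2 = {p2}ᶜ)
    -- `τᵢ : βX → βYᵢ` is the (unique) continuous extension of `id_X`
    (τ1 : StoneCech X → StoneCech Y1) (hτ1 : Continuous τ1)
    (hext1 : ∀ x : X, τ1 (stoneCechUnit x) = stoneCechUnit (ι1 x))
    (τ2 : StoneCech X → StoneCech Y2) (hτ2 : Continuous τ2)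
    (hext2 : ∀ x : X, τ2 (stoneCechUnit x) = stoneCechUnit (ι2 x)) :
    (∃ f : Y2 → Y1, Continuous f ∧ ∀ x : X, f (ι2 x) = ι1 x) ↔
      τ2 ⁻¹' {stoneCechUnit p2} ⊆ τ1 ⁻¹' {stoneCechUnit p1} := by
  have hdi : IsDenseInducing ι2 := ⟨hemb2.isInducing, hdense2⟩
  have hp2_notMem : p2 ∉ range ι2 := by simp [hp2]
  constructor
  · rintro ⟨f, hf, hfι⟩ z (hz : τ2 z = stoneCechUnit p2)
    have hfp2 : f p2 = p1 := by
      simpa [hp1] using apply_notMem_range_of_comp_eq hemb1 hdi hf hfι hp2_notMem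
    calc τ1 z = stoneCechExtend (continuous_stoneCechUnit.comp hf) (τ2 z) :=
          (congrFun (stoneCechExtend_comp_eq hτ1 hext1 hτ2 hext2 hf hfι) z).symm
      _ = stoneCechUnit p1 := by rw [hz, stoneCechExtend_stoneCechUnit, Function.comp_apply, hfp2]
  · intro H
    refine ⟨hdi.extend ι1, hdi.continuous_extend fun y => ?_, hdi.extend_eq hemb1.continuous⟩
    by_cases hy : y = p2
    · subst hy
      exact ⟨p1, tendsto_iff_comap.mpr <| comap_nhds_le_comap_nhds_of_mem_closure_image
        fun B => mem_closure_image_of_preimage_subset hτ1 hext1 hτ2 hext2 H⟩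
    · obtain ⟨x, rfl⟩ : y ∈ range ι2 := hp2 ▸ hy
      exact ⟨ι1 x, hemb2.isInducing.nhds_eq_comap x ▸ hemb1.continuous.tendsto x⟩

/-- Let `X` be a Tychonoff space and let `Y₁, Y₂` be one-point Tychonoff
extensions of `X`, with `τᵢ : βX → βYᵢ` the unique continuous extension of the identity map of
`X`.  Then `Y₁ ≤ Y₂` (there is a continuous map from `Y₂` into `Y₁` fixing `X` pointwise) if and
only if `τ₂⁻¹(Y₂ \ X) ⊆ τ₁⁻¹(Y₁ \ X)`. -/
theorem stmt1 {X : Type u} [TopologicalSpace X] [T35Space X]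
    -- `Y₁` is a one-point Tychonoff extension of `X`, with remainder point `p₁`
    (Y1 : Type u) [TopologicalSpace Y1] [T35Space Y1]
    (ι1 : X → Y1) (hemb1 : Topology.IsEmbedding ι1) (hdense1 : DenseRange ι1)
    (p1 : Y1) (hp1 : Set.range ι1 = {p1}ᶜ)
    -- `Y₂` is a one-point Tychonoff extension of `X`, with remainder point `p₂`
    (Y2 : Type u) [TopologicalSpace Y2] [T35Space Y2]
    (ι2 : X → Y2) (hemb2 : Topology.IsEmbedding ι2) (hdense2 : DenseRange ι2)
    (p2 : Y2) (hp2 : Set.range ι2 = {p2}ᶜ)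
    -- `τᵢ : βX → βYᵢ` is the (unique) continuous extension of `id_X`
    (τ1 : StoneCech X → StoneCech Y1) (hτ1 : Continuous τ1)
    (hext1 : ∀ x : X, τ1 (stoneCechUnit x) = stoneCechUnit (ι1 x))
    (τ2 : StoneCech X → StoneCech Y2) (hτ2 : Continuous τ2)
    (hext2 : ∀ x : X, τ2 (stoneCechUnit x) = stoneCechUnit (ι2 x)) :
    (∃ f : Y2 → Y1, Continuous f ∧ ∀ x : X, f (ι2 x) = ι1 x) ↔
      τ2 ⁻¹' {stoneCechUnit p2} ⊆ τ1 ⁻¹' {stoneCechUnit p1} :=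
  stmt1_general Y1 ι1 hemb1 p1 hp1 Y2 ι2 hemb2 hdense2 p2 hp2 τ1 hτ1 hext1 τ2 hτ2 hext2
end

section
/- Let X be a Tychonoff space. The function Θ defined on the set E(X) of (equivalence classes of) one-point Tychonoff extensions of X by Θ(Y) = τ_Y⁻¹(Y\X) is an anti-order-isomorphism from (E(X), ≤) onto the set of all nonempty compact subsets of βX\X partially ordered by inclusion. In particular, Θ is a bijection onto the nonempty compact subsets of βX\X, and for Y₁, Y₂ ∈ E(X) one has Y₁ ≤ Y₂ if and only if Θ(Y₂) ⊆ Θ(Y₁). -/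
open Set Topology Filter

universe u

/-- A one-point Tychonoff extension of `X`: a Tychonoff space containing (a homeomorphic copy
of) `X` as a dense subspace whose complement is a single point `pt`. -/
structure OnePointExt (X : Type u) [TopologicalSpace X] : Type (u + 1) where
  carrier : Type u
  top : TopologicalSpace carrier
  t35 : @T35Space carrier top
  ι : X → carrier
  emb : @Topology.IsEmbedding X carrier _ top ι
  pt : carrier
  range_eq : Set.range ι = {pt}ᶜ
  dense : @DenseRange carrier top X ι

attribute [instance] OnePointExt.top OnePointExt.t35

variable {X : Type u} [TopologicalSpace X]

/-- The partial order on one-point extensions: `Y₁ ≤ Y₂` iff there is a continuous map from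
`Y₂` into `Y₁` fixing `X` pointwise. -/
def OnePointExt.le (Y1 Y2 : OnePointExt X) : Prop :=
  ∃ f : Y2.carrier → Y1.carrier, Continuous f ∧ ∀ x, f (Y2.ι x) = Y1.ι x

/-- Equivalence of extensions: a homeomorphism fixing `X` pointwise. -/
def OnePointExt.equiv (Y1 Y2 : OnePointExt X) : Prop :=
  ∃ h : Y1.carrier ≃ₜ Y2.carrier, ∀ x, h (Y1.ι x) = Y2.ι x

/-- `τ_Y : βX → βY`, the unique continuous extension of `id_X`. -/
noncomputable def OnePointExt.tau (Y : OnePointExt X) : StoneCech X → StoneCech Y.carrier :=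
  stoneCechExtend (continuous_stoneCechUnit.comp Y.emb.continuous)

/-- `Θ_X(Y) = τ_Y⁻¹(Y \ X)`, a subset of `βX`. -/
noncomputable def OnePointExt.theta (Y : OnePointExt X) : Set (StoneCech X) :=
  Y.tau ⁻¹' {stoneCechUnit Y.pt}

/-- A zero-set: `f⁻¹(0)` for a continuous `f : Z → [0,1]`. -/
def IsZeroSet {Z : Type u} [TopologicalSpace Z] (A : Set Z) : Prop :=
  ∃ f : Z → unitInterval, Continuous f ∧ A = f ⁻¹' {0}

/-- A cozero-set: a complement of a zero-set. -/
def IsCozeroSet {Z : Type u} [TopologicalSpace Z] (A : Set Z) : Prop :=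
  ∃ f : Z → unitInterval, Continuous f ∧ A = (f ⁻¹' {0})ᶜ

/-- `λ_P X = ⋃ { int_{βX} cl_{βX} C : C a cozero-set of X whose closure in X has P }`. -/
def lambdaP (P : (Z : Type u) → [TopologicalSpace Z] → Prop) (X : Type u)
    [TopologicalSpace X] : Set (StoneCech X) :=
  ⋃ C ∈ {C : Set X | IsCozeroSet C ∧ P (closure C)},
    interior (closure (stoneCechUnit '' C))

/-- A pseudocompact space: every continuous real-valued function is bounded. -/
def Pseudocompact (Z : Type u) [TopologicalSpace Z] : Prop :=
  ∀ f : Z → ℝ, Continuous f → ∃ M, ∀ z, |f z| ≤ M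

/-- `P` is a topological property: it is invariant under homeomorphisms. -/
def TopProperty (P : (Z : Type u) → [TopologicalSpace Z] → Prop) : Prop :=
  ∀ (Z W : Type u) [TopologicalSpace Z] [TopologicalSpace W], Z ≃ₜ W → P Z → P W

/-- `P` is closed hereditary: closed subspaces of a space with `P` have `P`. -/
def ClosedHereditary (P : (Z : Type u) → [TopologicalSpace Z] → Prop) : Prop :=
  ∀ (Z : Type u) [TopologicalSpace Z], P Z → ∀ F : Set Z, IsClosed F → P F

/-- `P` is preserved under finite closed sums of subspaces. -/
def FiniteClosedSums (P : (Z : Type u) → [TopologicalSpace Z] → Prop) : Prop :=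
  ∀ (Z : Type u) [TopologicalSpace Z] [T2Space Z] (n : ℕ) (F : Fin n → Set Z),
    (∀ i, IsClosed (F i)) → (∀ i, P (F i)) → (⋃ i, F i) = univ → P Z

/-- `P` is preserved under locally finite closed sums of subspaces. -/
def LocallyFiniteClosedSums (P : (Z : Type u) → [TopologicalSpace Z] → Prop) : Prop :=
  ∀ (Z : Type u) [TopologicalSpace Z] [T2Space Z] (ι : Type u) (F : ι → Set Z),
    LocallyFinite F → (∀ i, IsClosed (F i)) → (∀ i, P (F i)) → (⋃ i, F i) = univ → P Z

/-- `P` is preserved under countable closed sums of subspaces. -/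
def CountableClosedSums (P : (Z : Type u) → [TopologicalSpace Z] → Prop) : Prop :=
  ∀ (Z : Type u) [TopologicalSpace Z] [T2Space Z] (F : ℕ → Set Z),
    (∀ i, IsClosed (F i)) → (∀ i, P (F i)) → (⋃ i, F i) = univ → P Z

/-- Mrówka's condition (W): if a Tychonoff space `T` has a point `p` with an open base `B` at
`p` such that `T \ b` has `P` for each `b ∈ B`, then `T` has `P`. -/
def MrowkaW (P : (Z : Type u) → [TopologicalSpace Z] → Prop) : Prop :=
  ∀ (T : Type u) [TopologicalSpace T] [T35Space T] (p : T) (B : Set (Set T)),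
    (∀ b ∈ B, IsOpen b ∧ p ∈ b) →
    (∀ V : Set T, IsOpen V → p ∈ V → ∃ b ∈ B, b ⊆ V) →
    (∀ b ∈ B, P (↥(bᶜ))) → P T

/-- `X` is locally-P: every point has an open neighborhood whose closure has `P`. -/
def LocallyP (P : (Z : Type u) → [TopologicalSpace Z] → Prop)
    (X : Type u) [TopologicalSpace X] : Prop :=
  ∀ x : X, ∃ U : Set X, IsOpen U ∧ x ∈ U ∧ P (closure U)

/-- `P` coincides with pseudocompactness. -/
def IsPseudocompactness (P : (Z : Type u) → [TopologicalSpace Z] → Prop) : Prop :=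
  ∀ (Z : Type u) [TopologicalSpace Z], P Z ↔ Pseudocompact Z

/-- A `P`-far one-point extension: for every zero-set `Z` of `X` contained in a cozero-set `C`
of `X` whose closure has `P`, the closure of `Z` in the extension misses the remainder. -/
def OnePointExt.PFar (P : (Z : Type u) → [TopologicalSpace Z] → Prop)
    (Y : OnePointExt X) : Prop :=
  ∀ Z C : Set X, IsZeroSet Z → IsCozeroSet C → P (closure C) → Z ⊆ C →
    Y.pt ∉ closure (Y.ι '' Z)

/-- Čech-complete: `Z` is a Gδ-set in `βZ`. -/
def CechComplete (Z : Type u) [TopologicalSpace Z] : Prop :=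
  IsGδ (Set.range (stoneCechUnit : Z → StoneCech Z))

/-- The extension is first countable at the added point. -/
def OnePointExt.FirstCountableAtPt (Y : OnePointExt X) : Prop :=
  (𝓝 Y.pt).IsCountablyGenerated

/-- Strong zero-dimensionality: `βX` has an open base of clopen sets. -/
def StronglyZeroDimensional (X : Type u) [TopologicalSpace X] : Prop :=
  ∀ U : Set (StoneCech X), IsOpen U → ∀ x ∈ U,
    ∃ V : Set (StoneCech X), IsClopen V ∧ x ∈ V ∧ V ⊆ U

/-- `Δ` is an order-isomorphism from the subset `A` of one-point extensions of `X` (with the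
order `≤`) onto the subset `B` of one-point extensions of `Y`, where extensions are regarded
up to the equivalence `OnePointExt.equiv`: `Δ` maps `A` into `B`, reflects and preserves `≤`
on `A`, and every member of `B` is equivalent to the image of a member of `A`. -/
def RestrictedOrderIso {X Y : Type u} [TopologicalSpace X] [TopologicalSpace Y]
    (A : Set (OnePointExt X)) (B : Set (OnePointExt Y))
    (Δ : OnePointExt X → OnePointExt Y) : Prop :=
  (∀ T ∈ A, Δ T ∈ B) ∧
  (∀ T1 ∈ A, ∀ T2 ∈ A, (T1.le T2 ↔ (Δ T1).le (Δ T2))) ∧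
  (∀ S ∈ B, ∃ T ∈ A, (Δ T).equiv S)
/-!
Since `τ_Y` is onto `βY`, `Θ(Y)` is a nonempty closed subset of `βX`, and it misses `X`
because `τ_Y` sends each point of `X` to itself in `Y \ {pt}`. The added point of `Y` lies in the
closure of `A ⊆ X` iff `Θ(Y)` meets `cl_{βX} A`, so `Θ(Y)` determines the neighbourhoods of the
added point; this gives `Θ(Y₂) ⊆ Θ(Y₁) → Y₁ ≤ Y₂`. Conversely a continuous map `Y₂ → Y₁` fixing
`X` fixes the added point, and its extension `βY₂ → βY₁` carries `Θ(Y₂)` into `Θ(Y₁)`.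
Finally, a nonempty compact `C ⊆ βX \ X` is `Θ` of the subspace `X ∪ {∞}` of `βX / C`, realised
as the one-point compactification of `βX \ C`.
-/

open Function OnePoint

theorem DenseRange.eq_of_comp_eq_of_isInducing {Z B K : Type*} [TopologicalSpace Z]
    [TopologicalSpace B] [TopologicalSpace K] [T2Space B] {u : Z → B} (hu : Continuous u)
    (hud : DenseRange u) {v : Z → K} (hv : IsInducing v) {g : B → K} (hg : Continuous g)
    (hgu : g ∘ u = v) {p : B} {z : Z} (hp : g p = v z) : p = u z := by
  have : (comap u (𝓝 p)).NeBot := comap_neBot fun t ht => by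
    obtain ⟨_, hat, a, rfl⟩ := mem_closure_iff_nhds.1 (hud p) t ht
    exact ⟨a, hat⟩
  have hup : Tendsto u (comap u (𝓝 p)) (𝓝 p) := tendsto_comap
  have hz : Tendsto id (comap u (𝓝 p)) (𝓝 z) := by
    rw [hv.tendsto_nhds_iff, ← hp, ← hgu]
    exact (hg.tendsto p).comp hup
  exact tendsto_nhds_unique hup (hu.continuousAt.tendsto.comp hz)

theorem surjective_stoneCechExtend {α β : Type*} [TopologicalSpace α] [TopologicalSpace β]
    [CompactSpace β] [T2Space β] {f : α → β} (hf : Continuous f) (hd : DenseRange f) :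
    Surjective (stoneCechExtend hf) := by
  have hsub : range f ⊆ range (stoneCechExtend hf) := by
    rintro _ ⟨a, rfl⟩
    exact ⟨stoneCechUnit a, stoneCechExtend_stoneCechUnit hf a⟩
  rw [← range_eq_univ, ← (isCompact_range (continuous_stoneCechExtend hf)).isClosed.closure_eq]
  exact (hd.mono hsub).closure_eq

open Classical in
noncomputable def collapseToInfty {B : Type*} (C : Set B) (b : B) : OnePoint ↥Cᶜ :=
  if h : b ∈ C then ∞ else ((⟨b, h⟩ : ↥Cᶜ) : OnePoint ↥Cᶜ)

section collapseToInfty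

variable {B : Type*} {C : Set B}

theorem collapseToInfty_of_mem {b : B} (hb : b ∈ C) : collapseToInfty C b = ∞ :=
  dif_pos hb

theorem collapseToInfty_of_notMem {b : B} (hb : b ∉ C) :
    collapseToInfty C b = ↑(⟨b, hb⟩ : ↥Cᶜ) :=
  dif_neg hb

theorem collapseToInfty_comp_val :
    collapseToInfty C ∘ Subtype.val = ((↑) : ↥Cᶜ → OnePoint ↥Cᶜ) :=
  funext fun b => collapseToInfty_of_notMem b.2

theorem preimage_collapseToInfty_infty : collapseToInfty C ⁻¹' {∞} = C := by
  ext b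
  by_cases hb : b ∈ C <;> simp [collapseToInfty, hb]

theorem surjective_collapseToInfty (hC : C.Nonempty) : Surjective (collapseToInfty C) := by
  refine OnePoint.rec ?_ fun b => ⟨b, collapseToInfty_of_notMem b.2⟩
  obtain ⟨c, hc⟩ := hC
  exact ⟨c, collapseToInfty_of_mem hc⟩

theorem continuous_collapseToInfty [TopologicalSpace B] [T2Space B] (hC : IsClosed C) :
    Continuous (collapseToInfty C) := by
  refine continuous_def.2 fun s hs => ?_
  by_cases h : ∞ ∈ s
  · have hpre : (collapseToInfty C ⁻¹' s)ᶜ =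
        Subtype.val '' (((↑) : ↥Cᶜ → OnePoint ↥Cᶜ) ⁻¹' s)ᶜ := by
      ext b
      by_cases hb : b ∈ C <;> simp [collapseToInfty, hb, h]
    rw [← isClosed_compl_iff, hpre]
    exact (((isOpen_iff_of_mem' h).1 hs).1.image continuous_subtype_val).isClosed
  · have hpre : collapseToInfty C ⁻¹' s =
        Subtype.val '' (((↑) : ↥Cᶜ → OnePoint ↥Cᶜ) ⁻¹' s) := by
      ext b
      by_cases hb : b ∈ C <;> simp [collapseToInfty, hb, h]
    rw [hpre]
    exact hC.isOpen_compl.isOpenMap_subtype_val _ ((isOpen_iff_of_notMem h).1 hs)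

end collapseToInfty

namespace OnePointExt

section theta

variable (Y : OnePointExt X)

theorem continuous_tau : Continuous Y.tau := continuous_stoneCechExtend _

theorem tau_comp_stoneCechUnit : Y.tau ∘ stoneCechUnit = stoneCechUnit ∘ Y.ι :=
  stoneCechExtend_extends _

theorem tau_stoneCechUnit (x : X) : Y.tau (stoneCechUnit x) = stoneCechUnit (Y.ι x) :=
  congrFun Y.tau_comp_stoneCechUnit x

theorem ι_ne_pt (x : X) : Y.ι x ≠ Y.pt := by
  simpa [Y.range_eq] using mem_range_self (f := Y.ι) x

theorem isOpenEmbedding_ι : IsOpenEmbedding Y.ι :=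
  ⟨Y.emb, Y.range_eq ▸ isOpen_compl_singleton⟩

theorem isCompact_theta : IsCompact Y.theta :=
  (isClosed_singleton.preimage Y.continuous_tau).isCompact

theorem theta_nonempty : Y.theta.Nonempty :=
  surjective_stoneCechExtend _ (denseRange_stoneCechUnit.comp Y.dense continuous_stoneCechUnit)
    (stoneCechUnit Y.pt)

theorem theta_subset_compl_range : Y.theta ⊆ (range (stoneCechUnit : X → StoneCech X))ᶜ := by
  rintro _ hp ⟨x, rfl⟩
  rw [theta, mem_preimage, tau_stoneCechUnit, mem_singleton_iff] at hp
  exact Y.ι_ne_pt x (injective_stoneCechUnit_of_t35Space hp)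

theorem closure_image_stoneCechUnit_ι (A : Set X) :
    closure (stoneCechUnit '' (Y.ι '' A)) = Y.tau '' closure (stoneCechUnit '' A) := by
  rw [← Y.continuous_tau.isClosedMap.closure_image_eq_of_continuous Y.continuous_tau,
    image_image, image_image]
  simp only [tau_stoneCechUnit]

theorem pt_mem_closure_image_iff (A : Set X) :
    Y.pt ∈ closure (Y.ι '' A) ↔ (closure (stoneCechUnit '' A) ∩ Y.theta).Nonempty := by
  rw [isEmbedding_stoneCechUnit.closure_eq_preimage_closure_image, mem_preimage,
    closure_image_stoneCechUnit_ι]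
  rfl

end theta

section order

variable {Y₁ Y₂ : OnePointExt X}

theorem apply_pt_eq_pt {f : Y₂.carrier → Y₁.carrier} (hf : Continuous f)
    (hfι : ∀ x, f (Y₂.ι x) = Y₁.ι x) : f Y₂.pt = Y₁.pt := by
  by_contra hne
  obtain ⟨x, hx⟩ : f Y₂.pt ∈ range Y₁.ι := Y₁.range_eq ▸ hne
  exact Y₂.ι_ne_pt x (Y₂.dense.eq_of_comp_eq_of_isInducing Y₂.emb.continuous Y₁.emb.isInducing
    hf (funext hfι) hx.symm).symm

theorem theta_subset_of_le (h : Y₁.le Y₂) : Y₂.theta ⊆ Y₁.theta := by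
  obtain ⟨f, hf, hfι⟩ := h
  have hc : Continuous (stoneCechUnit ∘ f) := continuous_stoneCechUnit.comp hf
  have hF : stoneCechExtend hc ∘ Y₂.tau = Y₁.tau := by
    refine stoneCech_hom_ext ((continuous_stoneCechExtend hc).comp Y₂.continuous_tau)
      Y₁.continuous_tau (funext fun x => ?_)
    simp [tau_stoneCechUnit, hfι]
  intro p hp
  rw [theta, mem_preimage, ← hF, comp_apply, mem_singleton_iff.1 hp,
    stoneCechExtend_stoneCechUnit, comp_apply, apply_pt_eq_pt hf hfι]
  rfl

theorem le_of_theta_subset (h : Y₂.theta ⊆ Y₁.theta) : Y₁.le Y₂ := by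
  set f := extend Y₂.ι Y₁.ι fun _ => Y₁.pt
  have hfι : ∀ x, f (Y₂.ι x) = Y₁.ι x := Y₂.emb.injective.extend_apply _ _
  have hfpt : f Y₂.pt = Y₁.pt := extend_apply' _ _ _ fun ⟨x, hx⟩ => Y₂.ι_ne_pt x hx
  refine ⟨f, continuous_iff_continuousAt.2 fun y => ?_, hfι⟩
  by_cases hy : y = Y₂.pt
  · subst hy
    refine tendsto_nhds.2 fun V hV hptV => ?_
    rw [hfpt] at hptV
    set A := Y₁.ι ⁻¹' Vᶜ
    have h₁ : Y₁.pt ∉ closure (Y₁.ι '' A) := fun hmem =>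
      closure_minimal (image_preimage_subset _ _) hV.isClosed_compl hmem hptV
    have h₂ : Y₂.pt ∉ closure (Y₂.ι '' A) := by
      rw [pt_mem_closure_image_iff] at h₁ ⊢
      exact fun ⟨p, hpA, hp⟩ => h₁ ⟨p, hpA, h hp⟩
    filter_upwards [isClosed_closure.isOpen_compl.mem_nhds h₂] with y hy
    by_cases hy' : y = Y₂.pt
    · rwa [hy', mem_preimage, hfpt]
    obtain ⟨x, rfl⟩ : y ∈ range Y₂.ι := Y₂.range_eq ▸ hy'
    rw [mem_preimage, hfι]
    by_contra hx
    exact hy (subset_closure (mem_image_of_mem _ hx))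
  · obtain ⟨x, rfl⟩ : y ∈ range Y₂.ι := Y₂.range_eq ▸ hy
    rw [← Y₂.isOpenEmbedding_ι.continuousAt_iff, show f ∘ Y₂.ι = Y₁.ι from funext hfι]
    exact Y₁.emb.continuous.continuousAt

theorem le_iff_theta_subset : Y₁.le Y₂ ↔ Y₂.theta ⊆ Y₁.theta :=
  ⟨theta_subset_of_le, le_of_theta_subset⟩

theorem equiv_iff_theta_eq : Y₁.equiv Y₂ ↔ Y₁.theta = Y₂.theta := by
  refine ⟨fun ⟨e, he⟩ => ?_, fun h => ?_⟩
  · refine (theta_subset_of_le ⟨e, e.continuous, he⟩).antisymm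
      (theta_subset_of_le ⟨e.symm, e.symm.continuous, fun x => ?_⟩)
    rw [← he, Homeomorph.symm_apply_apply]
  · obtain ⟨f, hf, hfι⟩ := le_of_theta_subset h.ge
    obtain ⟨g, hg, hgι⟩ := le_of_theta_subset h.le
    have hfg : f ∘ g = id := Y₁.dense.equalizer (hf.comp hg) continuous_id
      (funext fun x => by simp [hgι, hfι])
    have hgf : g ∘ f = id := Y₂.dense.equalizer (hg.comp hf) continuous_id
      (funext fun x => by simp [hgι, hfι])
    exact ⟨⟨⟨g, f, congrFun hfg, congrFun hgf⟩, hg, hf⟩, hgι⟩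

end order

section existence

def ofEmbedding {K : Type u} [TopologicalSpace K] [T35Space K] (e : X → K) (he : IsEmbedding e)
    (hd : DenseRange e) (k : K) (hk : k ∉ range e) : OnePointExt X where
  carrier := ↥(insert k (range e))
  top := inferInstance
  t35 := inferInstance
  ι := codRestrict e _ fun x => mem_insert_of_mem _ (mem_range_self x)
  emb := he.codRestrict _ _
  pt := ⟨k, mem_insert _ _⟩
  range_eq := by
    ext ⟨w, hw⟩
    rcases hw with rfl | ⟨x, rfl⟩
    · simpa [Subtype.ext_iff] using hk
    · exact iff_of_true ⟨x, rfl⟩ fun h => hk ⟨x, congrArg Subtype.val h⟩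
  dense := by
    rw [DenseRange, Subtype.dense_iff, ← range_comp]
    exact fun w _ => hd w

theorem theta_eq_preimage {K : Type*} [TopologicalSpace K] [CompactSpace K] [T2Space K]
    (Y : OnePointExt X) {h : Y.carrier → K} (hh : IsInducing h) {g : StoneCech X → K}
    (hg : Continuous g) (hgh : g ∘ stoneCechUnit = h ∘ Y.ι) : Y.theta = g ⁻¹' {h Y.pt} := by
  have hj : stoneCechExtend hh.continuous ∘ Y.tau = g := by
    refine stoneCech_hom_ext ((continuous_stoneCechExtend _).comp Y.continuous_tau) hg ?_
    rw [comp_assoc, tau_comp_stoneCechUnit, ← comp_assoc, stoneCechExtend_extends, hgh]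
  ext p
  rw [theta, mem_preimage, mem_singleton_iff, mem_preimage, mem_singleton_iff, ← hj, comp_apply]
  constructor
  · intro hp
    rw [hp, stoneCechExtend_stoneCechUnit]
  · exact denseRange_stoneCechUnit.eq_of_comp_eq_of_isInducing continuous_stoneCechUnit
      hh (continuous_stoneCechExtend _) (stoneCechExtend_extends _)

theorem exists_theta_eq [T35Space X] {C : Set (StoneCech X)} (hC : IsCompact C)
    (hne : C.Nonempty) (hCX : C ⊆ (range (stoneCechUnit : X → StoneCech X))ᶜ) :
    ∃ Y : OnePointExt X, Y.theta = C := by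
  have : LocallyCompactSpace ↥Cᶜ := hC.isClosed.isOpen_compl.locallyCompactSpace
  have hg := continuous_collapseToInfty hC.isClosed
  have hX : ∀ x, stoneCechUnit x ∈ Cᶜ := fun x hx => hCX hx (mem_range_self x)
  have he : IsEmbedding (collapseToInfty C ∘ stoneCechUnit) := by
    rw [show collapseToInfty C ∘ stoneCechUnit = (↑) ∘ codRestrict stoneCechUnit Cᶜ hX by
      rw [← collapseToInfty_comp_val]; rfl]
    exact isOpenEmbedding_coe.isEmbedding.comp (isEmbedding_stoneCechUnit.codRestrict _ _)
  have hd := (surjective_collapseToInfty hne).denseRange.comp denseRange_stoneCechUnit hg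
  have hk : ∞ ∉ range (collapseToInfty C ∘ stoneCechUnit) := by
    rintro ⟨x, hx⟩
    exact hX x (preimage_collapseToInfty_infty.subset hx)
  refine ⟨ofEmbedding _ he hd ∞ hk, ?_⟩
  rw [theta_eq_preimage _ (h := Subtype.val) IsInducing.subtypeVal hg rfl]
  exact preimage_collapseToInfty_infty

end existence

end OnePointExt

/-- For a Tychonoff space `X`, the map `Θ(Y) = τ_Y⁻¹(Y \ X)` is an
anti-order-isomorphism from the set `E(X)` of (equivalence classes of) one-point Tychonoff
extensions of `X` onto the set of nonempty compact subsets of `βX \ X` ordered by inclusion: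
`Θ` takes values in the nonempty compact subsets of `βX \ X`, it is surjective onto them,
it identifies exactly the equivalent extensions, and `Y₁ ≤ Y₂ ↔ Θ(Y₂) ⊆ Θ(Y₁)`. -/
theorem stmt2 {X : Type u} [TopologicalSpace X] [T35Space X] :
    (∀ Y : OnePointExt X,
      IsCompact Y.theta ∧ Y.theta.Nonempty ∧
        Y.theta ⊆ (Set.range (stoneCechUnit : X → StoneCech X))ᶜ) ∧
    (∀ C : Set (StoneCech X),
      IsCompact C → C.Nonempty → C ⊆ (Set.range (stoneCechUnit : X → StoneCech X))ᶜ →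
        ∃ Y : OnePointExt X, Y.theta = C) ∧
    (∀ Y1 Y2 : OnePointExt X, Y1.equiv Y2 ↔ Y1.theta = Y2.theta) ∧
    (∀ Y1 Y2 : OnePointExt X, Y1.le Y2 ↔ Y2.theta ⊆ Y1.theta) :=
  ⟨fun Y => ⟨Y.isCompact_theta, Y.theta_nonempty, Y.theta_subset_compl_range⟩,
    fun _ hC hne hCX => OnePointExt.exists_theta_eq hC hne hCX,
    fun _ _ => OnePointExt.equiv_iff_theta_eq,
    fun _ _ => OnePointExt.le_iff_theta_subset⟩
end

section
/- Let X be a Tychonoff space and let Y = X ∪ {p} be a one-point Tychonoff extension of X. Then Y is first-countable at the point p if and only if Θ_X(Y) = τ_Y⁻¹(p) is a zero-set of βX. -/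
open Set Topology Filter

universe u

variable {X : Type u} [TopologicalSpace X]

section StmtThreeHelpers

variable {X : Type u} [TopologicalSpace X]

lemma OnePointExt.continuous_tau' (Y : OnePointExt X) : Continuous Y.tau :=
  continuous_stoneCechExtend _

lemma OnePointExt.tau_unit' (Y : OnePointExt X) (x : X) :
    Y.tau (stoneCechUnit x) = stoneCechUnit (Y.ι x) :=
  congrFun (stoneCechExtend_extends (continuous_stoneCechUnit.comp Y.emb.continuous)) x

lemma OnePointExt.ext_comm' (Y : OnePointExt X) {g : Y.carrier → unitInterval}
    (hg : Continuous g) :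
    stoneCechExtend (hg.comp Y.emb.continuous) = stoneCechExtend hg ∘ Y.tau := by
  refine denseRange_stoneCechUnit.equalizer (continuous_stoneCechExtend _)
    ((continuous_stoneCechExtend _).comp Y.continuous_tau') ?_
  funext x
  have h1 := congrFun (stoneCechExtend_extends (hg.comp Y.emb.continuous)) x
  have h2 := congrFun (stoneCechExtend_extends hg) (Y.ι x)
  simp only [Function.comp_apply] at h1 h2 ⊢
  rw [h1, Y.tau_unit', h2]

end StmtThreeHelpers

section StmtThreeDirections

variable {X : Type u} [TopologicalSpace X]

lemma stmt3_mpr (Y : OnePointExt X) (h : IsZeroSet Y.theta) : Y.FirstCountableAtPt := by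
  obtain ⟨F, hF, hΘ⟩ := h
  have hFc : Continuous fun q => (F q : ℝ) := continuous_subtype_val.comp hF
  set K : ℕ → Set (StoneCech X) := fun n => {q | (1 / (n + 2) : ℝ) ≤ (F q : ℝ)} with hK
  have hKclosed : ∀ n, IsClosed (K n) := fun n => isClosed_le continuous_const hFc
  set T : ℕ → Set (StoneCech Y.carrier) := fun n => Y.tau '' K n with hT
  have hTclosed : ∀ n, IsClosed (T n) := fun n =>
    (((hKclosed n).isCompact).image Y.continuous_tau').isClosed
  set V : ℕ → Set Y.carrier := fun n => stoneCechUnit ⁻¹' (T n)ᶜ with hV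
  have hVopen : ∀ n, IsOpen (V n) := fun n =>
    (hTclosed n).isOpen_compl.preimage continuous_stoneCechUnit
  have hFtheta : ∀ q, q ∈ Y.theta → (F q : ℝ) = 0 := by
    intro q hq
    rw [hΘ] at hq
    simp only [Set.mem_preimage, Set.mem_singleton_iff] at hq
    exact_mod_cast congrArg (fun z : unitInterval => (z : ℝ)) hq
  have hpV : ∀ n, Y.pt ∈ V n := by
    intro n
    simp only [hV, Set.mem_preimage, Set.mem_compl_iff, hT]
    rintro ⟨q, hq, hq'⟩
    have h0 : (F q : ℝ) = 0 := hFtheta q (by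
      simp only [OnePointExt.theta, Set.mem_preimage, Set.mem_singleton_iff]; exact hq')
    have h2 : (0 : ℝ) < 1 / (n + 2) := by positivity
    have := hq
    simp only [hK, Set.mem_setOf_eq] at this
    linarith
  have hbasis : (𝓝 Y.pt).HasBasis (fun _ : ℕ => True) V := by
    constructor
    intro s
    constructor
    · intro hsnhds
      obtain ⟨W, hWs, hWopen, hpW⟩ := mem_nhds_iff.mp hsnhds
      obtain ⟨g, hg, hgp, hg1⟩ := CompletelyRegularSpace.completely_regular Y.pt Wᶜ
        hWopen.isClosed_compl (by simpa using hpW)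
      set G := stoneCechExtend (hg.comp Y.emb.continuous) with hGdef
      have hGeq : G = stoneCechExtend hg ∘ Y.tau := Y.ext_comm' hg
      have hGc : Continuous fun q => (G q : ℝ) :=
        continuous_subtype_val.comp (continuous_stoneCechExtend _)
      set A : Set (StoneCech X) := {q | (1 / 2 : ℝ) ≤ (G q : ℝ)} with hA
      have hAcompact : IsCompact A := (isClosed_le continuous_const hGc).isCompact
      have hGtheta : ∀ q, q ∈ Y.theta → (G q : ℝ) = 0 := by
        intro q hq
        simp only [OnePointExt.theta, Set.mem_preimage, Set.mem_singleton_iff] at hq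
        have : G q = stoneCechExtend hg (stoneCechUnit Y.pt) := by
          rw [hGeq]; simp only [Function.comp_apply, hq]
        have hxx := congrFun (stoneCechExtend_extends hg) Y.pt
        simp only [Function.comp_apply] at hxx
        rw [this, hxx, hgp]
        simp
      set U : ℕ → Set (StoneCech X) := fun n => {q | (1 / (n + 2) : ℝ) < (F q : ℝ)} with hU
      have hUopen : ∀ n, IsOpen (U n) := fun n => isOpen_lt continuous_const hFc
      have hcover : A ⊆ ⋃ n : ℕ, U n := by
        intro q hq
        have hq0 : (0 : ℝ) ≤ (F q : ℝ) := (F q).2.1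
        have hqne : (F q : ℝ) ≠ 0 := by
          intro h0
          have hqθ : q ∈ Y.theta := by
            rw [hΘ]
            simp only [Set.mem_preimage, Set.mem_singleton_iff]
            exact Subtype.ext (by simpa using h0)
          have := hGtheta q hqθ
          simp only [hA, Set.mem_setOf_eq] at hq
          linarith
        have hqpos : (0 : ℝ) < (F q : ℝ) := lt_of_le_of_ne hq0 (Ne.symm hqne)
        obtain ⟨n, hn⟩ := exists_nat_one_div_lt hqpos
        refine Set.mem_iUnion.mpr ⟨n, ?_⟩
        simp only [hU, Set.mem_setOf_eq]
        have : (1 / (n + 2) : ℝ) ≤ 1 / (n + 1) := by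
          apply one_div_le_one_div_of_le <;> [positivity; linarith]
        calc (1 / (n + 2) : ℝ) ≤ 1 / (n + 1) := this
          _ < (F q : ℝ) := hn
      obtain ⟨t, ht⟩ := hAcompact.elim_finite_subcover U hUopen hcover
      set N := t.sup id with hN
      have hAK : A ⊆ K N := by
        intro q hq
        obtain ⟨n, hnt, hn⟩ := Set.mem_iUnion₂.mp (ht hq)
        simp only [hU, Set.mem_setOf_eq] at hn
        have hnN : (n : ℝ) ≤ N := by exact_mod_cast Finset.le_sup (f := id) hnt
        have : (1 / (N + 2) : ℝ) ≤ 1 / (n + 2) := by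
          apply one_div_le_one_div_of_le <;> [positivity; linarith]
        simp only [hK, Set.mem_setOf_eq]
        linarith
      refine ⟨N, trivial, fun y hy => hWs ?_⟩
      by_contra hyW
      have hyp : y ≠ Y.pt := fun h => hyW (h ▸ hpW)
      have hyr : y ∈ Set.range Y.ι := by rw [Y.range_eq]; exact hyp
      obtain ⟨x, rfl⟩ := hyr
      have hg1x : g (Y.ι x) = 1 := hg1 hyW
      have hGx : G (stoneCechUnit x) = 1 := by
        have hxx := congrFun (stoneCechExtend_extends (hg.comp Y.emb.continuous)) x
        simp only [Function.comp_apply] at hxx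
        rw [hGdef, hxx]
        exact hg1x
      have hxA : stoneCechUnit x ∈ A := by
        simp only [hA, Set.mem_setOf_eq, hGx]
        norm_num
      have : stoneCechUnit (Y.ι x) ∈ T N := ⟨_, hAK hxA, Y.tau_unit' x⟩
      exact hy this
    · rintro ⟨n, -, hVs⟩
      exact Filter.mem_of_superset ((hVopen n).mem_nhds (hpV n)) hVs
  exact hbasis.isCountablyGenerated

lemma stmt3_mp (Y : OnePointExt X) (h : Y.FirstCountableAtPt) : IsZeroSet Y.theta := by
  have : (𝓝 Y.pt).IsCountablyGenerated := h
  obtain ⟨s, hs⟩ := (𝓝 Y.pt).exists_antitone_basis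
  set V : ℕ → Set Y.carrier := fun n => interior (s n) with hVdef
  have hVopen : ∀ n, IsOpen (V n) := fun n => isOpen_interior
  have hpV : ∀ n, Y.pt ∈ V n := fun n =>
    mem_interior_iff_mem_nhds.mpr (hs.toHasBasis.mem_of_mem trivial)
  have hgex : ∀ n, ∃ g : Y.carrier → unitInterval,
      Continuous g ∧ g Y.pt = 0 ∧ Set.EqOn g 1 (V n)ᶜ := fun n =>
    CompletelyRegularSpace.completely_regular Y.pt (V n)ᶜ (hVopen n).isClosed_compl
      (by simp [hpV n])
  choose g hgc hgp hg1 using hgex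
  set H : ℕ → StoneCech Y.carrier → unitInterval := fun n => stoneCechExtend (hgc n) with hHdef
  set G : ℕ → StoneCech X → unitInterval := fun n q => H n (Y.tau q) with hGdef
  have hGc : ∀ n, Continuous fun q => ((G n q : ℝ)) := fun n =>
    continuous_subtype_val.comp ((continuous_stoneCechExtend _).comp Y.continuous_tau')
  have hG0 : ∀ n q, 0 ≤ ((G n q : ℝ)) := fun n q => (G n q).2.1
  have hG1 : ∀ n q, ((G n q : ℝ)) ≤ 1 := fun n q => (G n q).2.2
  set a : ℕ → StoneCech X → ℝ := fun n q => (1 / 2 : ℝ) ^ (n + 1) * ((G n q : ℝ)) with hadef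
  have ha0 : ∀ n q, 0 ≤ a n q := fun n q => by
    have := hG0 n q; positivity
  have hale : ∀ n q, a n q ≤ (1 / 2 : ℝ) ^ (n + 1) := fun n q => by
    have h1 := hG1 n q
    have h2 : (0:ℝ) ≤ (1/2:ℝ)^(n+1) := by positivity
    calc a n q ≤ (1/2:ℝ)^(n+1) * 1 := by
          rw [hadef]; exact mul_le_mul_of_nonneg_left h1 h2
      _ = (1/2:ℝ)^(n+1) := mul_one _
  have hgeo : Summable fun n : ℕ => (1 / 2 : ℝ) ^ (n + 1) :=
    (summable_geometric_two.mul_left (1/2 : ℝ)).congr fun n => by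
      rw [← pow_succ']
  have hsum : ∀ q, Summable fun n => a n q := fun q =>
    Summable.of_nonneg_of_le (fun n => ha0 n q) (fun n => hale n q) hgeo
  have htsum_half : (∑' n : ℕ, (1 / 2 : ℝ) ^ (n + 1)) = 1 := by
    have : (fun n : ℕ => (1 / 2 : ℝ) ^ (n + 1)) = fun n : ℕ => (1/2 : ℝ) * (1/2:ℝ)^n := by
      funext n; rw [← pow_succ']
    rw [this, tsum_mul_left, tsum_geometric_two]
    norm_num
  set f0 : StoneCech X → ℝ := fun q => ∑' n, a n q with hf0def
  have hf0c : Continuous f0 := by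
    refine continuous_tsum (fun n => (continuous_const.mul (hGc n))) hgeo ?_
    intro n q
    rw [Real.norm_eq_abs, abs_of_nonneg (ha0 n q)]
    exact hale n q
  have hf00 : ∀ q, 0 ≤ f0 q := fun q => tsum_nonneg (fun n => ha0 n q)
  have hf01 : ∀ q, f0 q ≤ 1 := fun q => by
    rw [hf0def]
    calc (∑' n, a n q) ≤ ∑' n : ℕ, (1/2:ℝ)^(n+1) :=
          Summable.tsum_le_tsum (fun n => hale n q) (hsum q) hgeo
      _ = 1 := htsum_half
  refine ⟨fun q => ⟨f0 q, hf00 q, hf01 q⟩, Continuous.subtype_mk hf0c _, ?_⟩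
  ext q
  simp only [Set.mem_preimage, Set.mem_singleton_iff, Subtype.ext_iff]
  show q ∈ Y.theta ↔ f0 q = 0
  constructor
  · intro hq
    simp only [OnePointExt.theta, Set.mem_preimage, Set.mem_singleton_iff] at hq
    have hGz : ∀ n, G n q = 0 := by
      intro n
      rw [hGdef]
      simp only [hq, hHdef]
      have hxx := congrFun (stoneCechExtend_extends (hgc n)) Y.pt
      simp only [Function.comp_apply] at hxx
      rw [hxx]
      exact hgp n
    have : ∀ n, a n q = 0 := fun n => by
      rw [hadef]; simp [hGz n]
    rw [hf0def]
    simp only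
    rw [tsum_congr this, tsum_zero]
  · intro hq
    -- each term is zero
    have haz : ∀ n, a n q = 0 := by
      intro n
      have hle : a n q ≤ f0 q := Summable.le_tsum (hsum q) n (fun m _ => ha0 m q)
      have := ha0 n q
      linarith [hq ▸ hle]
    have hGz : ∀ n, ((G n q : ℝ)) = 0 := by
      intro n
      have := haz n
      rw [hadef] at this
      have hpow : ((1:ℝ)/2)^(n+1) ≠ 0 := by positivity
      exact (mul_eq_zero.mp this).resolve_left hpow
    -- τ q avoids closure of unit '' (V n)ᶜ
    have hnotcl : ∀ n, Y.tau q ∉ closure (stoneCechUnit '' (V n)ᶜ) := by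
      intro n hmem
      have hone : Set.EqOn (fun z => H n z) (fun _ => (1 : unitInterval))
          (closure (stoneCechUnit '' (V n)ᶜ)) := by
        have hcl : IsClosed {z : StoneCech Y.carrier | H n z = 1} :=
          isClosed_eq (continuous_stoneCechExtend _) continuous_const
        have hsub : stoneCechUnit '' (V n)ᶜ ⊆ {z | H n z = 1} := by
          rintro _ ⟨y, hy, rfl⟩
          show H n (stoneCechUnit y) = 1
          have hxx := congrFun (stoneCechExtend_extends (hgc n)) y
          simp only [Function.comp_apply] at hxx
          exact hxx.trans (hg1 n hy)
        intro z hz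
        exact closure_minimal hsub hcl hz
      have h1 : H n (Y.tau q) = 1 := hone hmem
      have h0 : ((H n (Y.tau q) : ℝ)) = 0 := by
        have := hGz n
        rw [hGdef] at this
        exact this
      rw [h1] at h0
      norm_num at h0
    -- hence q is in the closure of unit '' (ι ⁻¹' V n)
    have hC : ∀ n, q ∈ closure (stoneCechUnit '' (Y.ι ⁻¹' V n)) := by
      intro n
      rw [mem_closure_iff]
      intro N hNopen hqN
      set N' := N ∩ Y.tau ⁻¹' (closure (stoneCechUnit '' (V n)ᶜ))ᶜ with hN'
      have hN'open : IsOpen N' :=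
        hNopen.inter (isClosed_closure.isOpen_compl.preimage Y.continuous_tau')
      have hqN' : q ∈ N' := ⟨hqN, hnotcl n⟩
      obtain ⟨x, hx⟩ := denseRange_stoneCechUnit.exists_mem_open hN'open ⟨q, hqN'⟩
      refine ⟨stoneCechUnit x, hx.1, x, ?_, rfl⟩
      have hx2 : Y.tau (stoneCechUnit x) ∉ closure (stoneCechUnit '' (V n)ᶜ) := hx.2
      rw [Y.tau_unit'] at hx2
      by_contra hxV
      exact hx2 (subset_closure ⟨Y.ι x, hxV, rfl⟩)
    -- conclude τ q = unit pt
    show q ∈ Y.theta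
    simp only [OnePointExt.theta, Set.mem_preimage, Set.mem_singleton_iff]
    by_contra hne
    obtain ⟨hfun, h0, h1, hIcc⟩ := exists_continuous_zero_one_of_isClosed
      (isClosed_singleton (x := stoneCechUnit Y.pt)) (isClosed_singleton (x := Y.tau q))
      (by simpa [Set.disjoint_singleton] using (Ne.symm hne))
    set W : Set Y.carrier := {y | hfun (stoneCechUnit y) < 1/2} with hWdef
    have hWopen : IsOpen W :=
      isOpen_lt (hfun.continuous.comp continuous_stoneCechUnit) continuous_const
    have hpW : Y.pt ∈ W := by
      simp only [hWdef, Set.mem_setOf_eq, h0 rfl]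
      norm_num
    have hWnhds : W ∈ 𝓝 Y.pt := hWopen.mem_nhds hpW
    obtain ⟨n, -, hsn⟩ := hs.toHasBasis.mem_iff.mp hWnhds
    have hVW : V n ⊆ W := interior_subset.trans hsn
    have hcl2 : closure (stoneCechUnit '' (Y.ι ⁻¹' V n)) ⊆
        {r : StoneCech X | hfun (Y.tau r) ≤ 1/2} := by
      apply closure_minimal
      · rintro _ ⟨x, hxV, rfl⟩
        show hfun (Y.tau (stoneCechUnit x)) ≤ 1/2
        rw [Y.tau_unit']
        exact le_of_lt (hVW hxV)
      · exact isClosed_le (hfun.continuous.comp Y.continuous_tau') continuous_const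
    have := hcl2 (hC n)
    have h1q : hfun (Y.tau q) = 1 := h1 rfl
    simp only [Set.mem_setOf_eq, h1q] at this
    norm_num at this

end StmtThreeDirections

/-- Let `X` be a Tychonoff space and `Y = X ∪ {p}` a one-point Tychonoff
extension of `X`.  Then `Y` is first countable at `p` if and only if `Θ_X(Y) = τ_Y⁻¹(p)` is a
zero-set of `βX`. -/
theorem stmt3 {X : Type u} [TopologicalSpace X] [T35Space X] (Y : OnePointExt X) :
    Y.FirstCountableAtPt ↔ IsZeroSet Y.theta :=
  ⟨stmt3_mp Y, stmt3_mpr Y⟩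
end

section
/- Let X be a locally compact Tychonoff space and let Y = X ∪ {p} be a one-point Tychonoff extension of X. Then Y is locally compact if and only if Θ_X(Y) = τ_Y⁻¹(p) is open in βX\X. -/
open Set Topology Filter

universe u

variable {X : Type u} [TopologicalSpace X]

/-! ### Auxiliary lemmas -/

lemma isEmbedding_stoneCechUnit' {X : Type u} [TopologicalSpace X] [T35Space X] :
    Topology.IsEmbedding (stoneCechUnit : X → StoneCech X) := by
  refine ⟨isInducing_iff_nhds.2 fun x => le_antisymm
    (continuous_stoneCechUnit.tendsto x).le_comap ?_, injective_stoneCechUnit_of_t35Space⟩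
  intro U hU
  obtain ⟨f, fc, fx, fK⟩ := CompletelyRegularSpace.completely_regular x (interior U)ᶜ
    isOpen_interior.isClosed_compl (by simp [mem_interior_iff_mem_nhds.2 hU])
  have hop : IsOpen {y : unitInterval | (y : ℝ) < 1} :=
    isOpen_Iio.preimage continuous_subtype_val
  refine mem_comap.2 ⟨stoneCechExtend fc ⁻¹' {y | (y : ℝ) < 1}, ?_, ?_⟩
  · refine IsOpen.mem_nhds (hop.preimage (continuous_stoneCechExtend fc)) ?_
    have : (f x : ℝ) = 0 := by rw [fx]; rfl
    show ((stoneCechExtend fc (stoneCechUnit x) : unitInterval) : ℝ) < 1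
    rw [← Function.comp_apply (f := stoneCechExtend fc), stoneCechExtend_extends fc, this]
    norm_num
  · intro z hz
    simp only [mem_preimage, mem_setOf_eq] at hz
    have hz' : ((f z : unitInterval) : ℝ) < 1 := by
      rw [← Function.comp_apply (f := stoneCechExtend fc) (g := stoneCechUnit) (x := z),
        stoneCechExtend_extends fc] at hz
      exact hz
    by_contra hzU
    have hmem : z ∈ (interior U)ᶜ := fun h => hzU (mem_of_mem_nhds (mem_interior_iff_mem_nhds.1 h))
    rw [fK hmem] at hz'
    norm_num at hz'

lemma isOpen_range_of_dense_embedding' {A Z : Type*} [TopologicalSpace A] [TopologicalSpace Z]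
    [T2Space Z] [LocallyCompactSpace A] {e : A → Z} (he : Topology.IsEmbedding e)
    (hd : DenseRange e) : IsOpen (Set.range e) := by
  rw [isOpen_iff_mem_nhds]
  rintro _ ⟨x, rfl⟩
  obtain ⟨K, hKc, hK⟩ := exists_compact_mem_nhds x
  obtain ⟨V, hV, hVU⟩ := he.isInducing.isOpen_iff.1 (isOpen_interior (s := K))
  have hVK : V ⊆ e '' K := by
    refine (hd.open_subset_closure_inter hV).trans ?_
    refine (closure_minimal ?_ (hKc.image he.continuous).isClosed)
    rintro z ⟨hzV, a, rfl⟩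
    have ha : a ∈ e ⁻¹' V := hzV
    rw [hVU] at ha
    exact ⟨a, interior_subset ha, rfl⟩
  have hx : x ∈ e ⁻¹' V := by rw [hVU]; exact mem_interior_iff_mem_nhds.2 hK
  exact mem_nhds_iff.2 ⟨V, hVK.trans (image_subset_range _ _), hV, hx⟩


lemma fiber_eq_aux' {A Z : Type u} [TopologicalSpace A] [TopologicalSpace Z] [T2Space Z]
    [T35Space A] [LocallyCompactSpace A] {e : A → Z} (he : Topology.IsEmbedding e)
    {f : StoneCech A → Z} (hf : Continuous f)
    (hfe : ∀ a, f (stoneCechUnit a) = e a)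
    {z : StoneCech A} {x : A} (h : f z = e x) : z = stoneCechUnit x := by
  obtain ⟨K, hKc, hK⟩ := exists_compact_mem_nhds x
  have hcover : z ∈ closure (stoneCechUnit '' K) ∪ closure (stoneCechUnit '' Kᶜ) := by
    have hz : z ∈ closure (range (stoneCechUnit : A → StoneCech A)) := by
      rw [denseRange_stoneCechUnit.closure_eq]; trivial
    rwa [← image_univ, ← union_compl_self K, image_union, closure_union] at hz
  rcases hcover with hz | hz
  · rw [((hKc.image continuous_stoneCechUnit).isClosed).closure_eq] at hz
    obtain ⟨k, hk, rfl⟩ := hz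
    have : e k = e x := by rw [← hfe k, h]
    rw [he.injective this]
  · exfalso
    have h1 : f z ∈ closure (e '' Kᶜ) := by
      have h2 := image_closure_subset_closure_image hf (s := stoneCechUnit '' Kᶜ) ⟨z, hz, rfl⟩
      have him : f '' (stoneCechUnit '' Kᶜ) = e '' Kᶜ := by
        rw [← image_comp]; exact image_congr fun a _ => hfe a
      rwa [him] at h2
    obtain ⟨V, hV, hVU⟩ := he.isInducing.isOpen_iff.1 (isOpen_interior (s := K))
    have hxV : e x ∈ V := by
      have : x ∈ e ⁻¹' V := by rw [hVU]; exact mem_interior_iff_mem_nhds.2 hK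
      exact this
    rw [h] at h1
    obtain ⟨w, hw1, a, ha, rfl⟩ := mem_closure_iff.1 h1 V hV hxV
    have : a ∈ e ⁻¹' V := hw1
    rw [hVU] at this
    exact ha (interior_subset this)

/-- Let `X` be a locally compact Tychonoff space and `Y = X ∪ {p}` a one-point
Tychonoff extension of `X`.  Then `Y` is locally compact if and only if `Θ_X(Y) = τ_Y⁻¹(p)` is
open in the subspace `βX \ X`. -/
theorem stmt4 {X : Type u} [TopologicalSpace X] [T35Space X] [LocallyCompactSpace X]
    (Y : OnePointExt X) :
    LocallyCompactSpace Y.carrier ↔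
      IsOpen ((Subtype.val ⁻¹' Y.theta :
        Set ↥((Set.range (stoneCechUnit : X → StoneCech X))ᶜ))) := by
  classical
  have hτc : Continuous Y.tau := continuous_stoneCechExtend _
  have hτu : ∀ x : X, Y.tau (stoneCechUnit x) = stoneCechUnit (Y.ι x) := fun x =>
    congrFun (stoneCechExtend_extends (continuous_stoneCechUnit.comp Y.emb.continuous)) x
  have hve : Topology.IsEmbedding (stoneCechUnit : Y.carrier → StoneCech Y.carrier) :=
    isEmbedding_stoneCechUnit'
  have he : Topology.IsEmbedding (fun x : X => stoneCechUnit (Y.ι x)) := hve.comp Y.emb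
  have hι_ne : ∀ x : X, Y.ι x ≠ Y.pt := fun x h => by
    have hx : Y.ι x ∈ Set.range Y.ι := mem_range_self x
    rw [Y.range_eq] at hx; exact hx h
  have hθmem : ∀ z, z ∈ Y.theta ↔ Y.tau z = stoneCechUnit Y.pt := fun z => Iff.rfl
  have hθsub : Y.theta ⊆ (Set.range (stoneCechUnit : X → StoneCech X))ᶜ := by
    rintro z hz ⟨x, rfl⟩
    have h1 : stoneCechUnit (Y.ι x) = stoneCechUnit Y.pt := by
      rw [← hτu x]; exact (hθmem _).1 hz
    exact hι_ne x (injective_stoneCechUnit_of_t35Space h1)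
  have hW : Y.tau ⁻¹' (Set.range (stoneCechUnit : Y.carrier → StoneCech Y.carrier))
      = Set.range (stoneCechUnit : X → StoneCech X) ∪ Y.theta := by
    ext z
    constructor
    · rintro ⟨y, hy⟩
      by_cases hyp : y = Y.pt
      · subst hyp; exact Or.inr ((hθmem _).2 hy.symm)
      · have hy' : y ∈ Set.range Y.ι := by rw [Y.range_eq]; exact hyp
        obtain ⟨x, rfl⟩ := hy'
        exact Or.inl ⟨x, (fiber_eq_aux' he hτc hτu hy.symm).symm⟩
    · rintro (⟨x, rfl⟩ | hz)
      · exact ⟨Y.ι x, (hτu x).symm⟩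
      · exact ⟨Y.pt, ((hθmem _).1 hz).symm⟩
  constructor
  · intro hLC
    have hv : IsOpen (Set.range (stoneCechUnit : Y.carrier → StoneCech Y.carrier)) :=
      isOpen_range_of_dense_embedding' hve denseRange_stoneCechUnit
    have hWopen : IsOpen (Set.range (stoneCechUnit : X → StoneCech X) ∪ Y.theta) :=
      hW ▸ hv.preimage hτc
    have heq : (Subtype.val ⁻¹' Y.theta :
          Set ↥((Set.range (stoneCechUnit : X → StoneCech X))ᶜ))
        = Subtype.val ⁻¹' (Set.range (stoneCechUnit : X → StoneCech X) ∪ Y.theta) := by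
      ext s
      simp only [mem_preimage, mem_union]
      exact ⟨Or.inr, fun h => h.elim (fun h' => absurd h' s.2) id⟩
    rw [heq]
    exact hWopen.preimage continuous_subtype_val
  · intro hopen
    obtain ⟨G, hG, hGeq⟩ := Topology.IsEmbedding.subtypeVal.isInducing.isOpen_iff.1 hopen
    have key : ∀ z (hz : z ∈ (Set.range (stoneCechUnit : X → StoneCech X))ᶜ),
        z ∈ G ↔ z ∈ Y.theta := fun z hz => by
      have := Set.ext_iff.1 hGeq ⟨z, hz⟩
      simpa using this
    have hG' : Set.range (stoneCechUnit : X → StoneCech X) ∪ G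
        = Set.range (stoneCechUnit : X → StoneCech X) ∪ Y.theta := by
      ext z
      by_cases hz : z ∈ Set.range (stoneCechUnit : X → StoneCech X)
      · simp [hz]
      · simp only [mem_union, hz, false_or]
        exact key z hz
    have hu_open : IsOpen (Set.range (stoneCechUnit : X → StoneCech X)) :=
      isOpen_range_of_dense_embedding' isEmbedding_stoneCechUnit' denseRange_stoneCechUnit
    have hWopen : IsOpen (Set.range (stoneCechUnit : X → StoneCech X) ∪ Y.theta) :=
      hG' ▸ hu_open.union hG
    have hKcomp : IsCompact (Set.range (stoneCechUnit : X → StoneCech X) ∪ Y.theta)ᶜ :=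
      hWopen.isClosed_compl.isCompact
    have hτsurj : Function.Surjective Y.tau := by
      have hde : DenseRange ((stoneCechUnit : Y.carrier → StoneCech Y.carrier) ∘ Y.ι) :=
        DenseRange.comp denseRange_stoneCechUnit Y.dense continuous_stoneCechUnit
      have hsub : Set.range ((stoneCechUnit : Y.carrier → StoneCech Y.carrier) ∘ Y.ι)
          ⊆ Set.range Y.tau := by
        rintro _ ⟨x, rfl⟩; exact ⟨stoneCechUnit x, hτu x⟩
      have hd : Dense (Set.range Y.tau) := hde.mono hsub
      have hcl : IsClosed (Set.range Y.tau) := (isCompact_range hτc).isClosed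
      intro w
      have hw : w ∈ closure (Set.range Y.tau) := by rw [hd.closure_eq]; trivial
      rwa [hcl.closure_eq] at hw
    have himg : Y.tau '' (Set.range (stoneCechUnit : X → StoneCech X) ∪ Y.theta)ᶜ
        = (Set.range (stoneCechUnit : Y.carrier → StoneCech Y.carrier))ᶜ := by
      ext w
      constructor
      · rintro ⟨z, hz, rfl⟩ hw
        have hz' : z ∈ Y.tau ⁻¹'
            (Set.range (stoneCechUnit : Y.carrier → StoneCech Y.carrier)) := hw
        rw [hW] at hz'
        exact hz hz'
      · intro hw
        obtain ⟨z, rfl⟩ := hτsurj w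
        refine ⟨z, fun hz => hw ?_, rfl⟩
        rw [← hW] at hz
        exact hz
    have hv_closed : IsClosed (Set.range (stoneCechUnit : Y.carrier → StoneCech Y.carrier))ᶜ := by
      rw [← himg]; exact (hKcomp.image hτc).isClosed
    have hv_open : IsOpen (Set.range (stoneCechUnit : Y.carrier → StoneCech Y.carrier)) :=
      isClosed_compl_iff.1 hv_closed
    exact hve.isInducing.locallyCompactSpace hv_open.isLocallyClosed
end

section
/- Let X be a Tychonoff space and let P be pseudocompactness. Then λ_P X = int_{βX}(υX), where υX is the Hewitt realcompactification of X. -/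
open Set Topology Filter

universe u

variable {X : Type u} [TopologicalSpace X]

/-- If every continuous real function on `X` is bounded on the open set `C`, then the
closure of `C` is pseudocompact. -/
private theorem pseudo_of_rel {X : Type u} [TopologicalSpace X] [T35Space X] {C : Set X} (hCopen : IsOpen C)
    (hrel : ∀ G : X → ℝ, Continuous G → ∃ M, ∀ x ∈ C, |G x| ≤ M) :
    ∀ g : (closure C) → ℝ, Continuous g → ∃ M, ∀ z, |g z| ≤ M := by
  intro g hg
  by_contra hun
  push_neg at hun
  -- choose open sets O n with val ⁻¹' O n = {z | n < |g z|}
  have hopen : ∀ n : ℕ, ∃ O : Set X, IsOpen O ∧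
      (Subtype.val ⁻¹' O : Set (closure C)) = {z | (n : ℝ) < |g z|} := by
    intro n
    have h1 : IsOpen {z : closure C | (n : ℝ) < |g z|} :=
      isOpen_lt continuous_const hg.abs
    rw [isOpen_induced_iff] at h1
    obtain ⟨O, hO, hOeq⟩ := h1
    exact ⟨O, hO, hOeq⟩
  choose O hOopen hOpre using hopen
  set V : ℕ → Set X := fun n => O n ∩ C with hV
  have hVopen : ∀ n, IsOpen (V n) := fun n => (hOopen n).inter hCopen
  have hVsub : ∀ n, V n ⊆ C := fun n => inter_subset_right
  have hVne : ∀ n, (V n).Nonempty := by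
    intro n
    obtain ⟨z, hz⟩ := hun n
    have hzO : (z : X) ∈ O n := by
      have : z ∈ (Subtype.val ⁻¹' O n : Set (closure C)) := by rw [hOpre]; exact hz
      exact this
    have : ((O n) ∩ C).Nonempty := by
      have hcl : (z : X) ∈ closure C := z.2
      exact mem_closure_iff.mp hcl (O n) (hOopen n) hzO
    exact this
  -- local finiteness
  have hLF : ∀ x : X, ∃ N ∈ 𝓝 x, ∃ n₀ : ℕ, ∀ m, n₀ ≤ m → N ∩ V m = ∅ := by
    intro x
    by_cases hx : x ∈ closure C
    · set z : (closure C) := ⟨x, hx⟩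
      have hcont := hg.continuousAt (x := z)
      have hmem : {w : (closure C) | |g w| < |g z| + 1} ∈ 𝓝 z := by
        have : IsOpen {w : (closure C) | |g w| < |g z| + 1} :=
          isOpen_lt hg.abs continuous_const
        exact this.mem_nhds (by simp)
      rw [nhds_induced, mem_comap] at hmem
      obtain ⟨N, hN, hNsub⟩ := hmem
      refine ⟨N, hN, ⌈|g z| + 1⌉₊, fun m hm => ?_⟩
      ext y; simp only [mem_inter_iff, mem_empty_iff_false, iff_false]
      rintro ⟨hyN, hyV⟩
      have hyc : y ∈ closure C := subset_closure (hVsub m hyV)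
      set w : (closure C) := ⟨y, hyc⟩
      have h1 : |g w| < |g z| + 1 := hNsub (show (w : X) ∈ N from hyN)
      have h2 : (m : ℝ) < |g w| := by
        have : w ∈ (Subtype.val ⁻¹' O m : Set (closure C)) := hyV.1
        rw [hOpre] at this; exact this
      have h3 : |g z| + 1 ≤ (m : ℝ) := le_trans (Nat.le_ceil _) (by exact_mod_cast hm)
      linarith
    · refine ⟨(closure C)ᶜ, (isClosed_closure.isOpen_compl).mem_nhds hx, 0, fun m _ => ?_⟩
      ext y; simp only [mem_inter_iff, mem_compl_iff, mem_empty_iff_false, iff_false]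
      rintro ⟨hyN, hyV⟩
      exact hyN (subset_closure (hVsub m hyV))
  -- choose points and Urysohn functions
  choose y hy using hVne
  have hury : ∀ n : ℕ, ∃ k : X → ℝ, Continuous k ∧ k (y n) = n ∧
      (∀ x ∉ V n, k x = 0) ∧ ∀ x, 0 ≤ k x := by
    intro n
    obtain ⟨f, hfc, hf0, hf1⟩ := CompletelyRegularSpace.completely_regular (y n) (V n)ᶜ
      (hVopen n).isClosed_compl (by simp [hy n])
    refine ⟨fun x => n * (1 - (f x : ℝ)), by fun_prop, by simp [hf0], fun x hx => ?_, fun x => ?_⟩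
    · have : f x = 1 := hf1 hx
      simp [this]
    · have h1 : ((f x : ℝ)) ≤ 1 := (f x).2.2
      exact mul_nonneg (Nat.cast_nonneg n) (by linarith)
  choose k hkc hkn hk0 hknn using hury
  set G : X → ℝ := fun x => ∑' n, k n x with hG
  have hloc : ∀ x : X, ∃ N ∈ 𝓝 x, ∃ n₀ : ℕ, ∀ z ∈ N, ∀ m, n₀ ≤ m → k m z = 0 := by
    intro x
    obtain ⟨N, hN, n₀, hNV⟩ := hLF x
    refine ⟨N, hN, n₀, fun z hz m hm => ?_⟩
    apply hk0
    intro hzV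
    have : z ∈ N ∩ V m := ⟨hz, hzV⟩
    rw [hNV m hm] at this
    exact this
  have hGeq : ∀ x : X, ∃ N ∈ 𝓝 x, ∃ n₀ : ℕ, ∀ z ∈ N,
      G z = ∑ m ∈ Finset.range n₀, k m z := by
    intro x
    obtain ⟨N, hN, n₀, h⟩ := hloc x
    refine ⟨N, hN, n₀, fun z hz => ?_⟩
    exact tsum_eq_sum (fun m hm => h z hz m (Nat.le_of_not_lt (fun hc => hm (Finset.mem_range.mpr hc))))
  have hGcont : Continuous G := by
    rw [continuous_iff_continuousAt]
    intro x
    obtain ⟨N, hN, n₀, h⟩ := hGeq x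
    have hfin : ContinuousAt (fun z => ∑ m ∈ Finset.range n₀, k m z) x :=
      (continuous_finset_sum _ (fun m _ => hkc m)).continuousAt
    apply hfin.congr
    filter_upwards [hN] with z hz
    exact (h z hz).symm
  have hGbig : ∀ n : ℕ, (n : ℝ) ≤ G (y n) := by
    intro n
    obtain ⟨N, hN, n₀, h⟩ := hloc (y n)
    have hsum : Summable (fun m => k m (y n)) := by
      apply summable_of_ne_finset_zero (s := Finset.range n₀)
      intro m hm
      exact h (y n) (mem_of_mem_nhds hN) m (Nat.le_of_not_lt (fun hc => hm (Finset.mem_range.mpr hc)))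
    have := Summable.le_tsum hsum n (fun m _ => hknn m (y n))
    rw [hkn n] at this
    exact this
  obtain ⟨M, hM⟩ := hrel G hGcont
  obtain ⟨n, hn⟩ := exists_nat_gt M
  have h1 := hM (y n) (hVsub n (hy n))
  have h2 := hGbig n
  have : (n : ℝ) ≤ M := le_trans h2 (le_trans (le_abs_self _) h1)
  linarith

private theorem rel_bound {X : Type u} [TopologicalSpace X] {C : Set X} {W : Set (StoneCech X)}
    (hW : W ⊆ ⋂ D ∈ {D : Set (StoneCech X) |
      IsCozeroSet D ∧ Set.range (stoneCechUnit : X → StoneCech X) ⊆ D}, D)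
    (hK : closure (stoneCechUnit '' C) ⊆ W)
    (G : X → ℝ) (hGc : Continuous G) : ∃ M, ∀ x ∈ C, |G x| ≤ M := by
  rcases C.eq_empty_or_nonempty with rfl | hne
  · exact ⟨0, by simp⟩
  have hpos : ∀ x : X, (0:ℝ) < 1 + |G x| := fun x => by positivity
  set t : X → unitInterval := fun x =>
    ⟨|G x| / (1 + |G x|), div_nonneg (abs_nonneg _) (hpos x).le,
      (div_le_one (hpos x)).mpr (by linarith [abs_nonneg (G x)])⟩ with ht_def
  have ht : Continuous t := by
    apply Continuous.subtype_mk
    exact hGc.abs.div (by fun_prop) fun x => (hpos x).ne'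
  set T := stoneCechExtend ht with hT_def
  have hTc : Continuous T := continuous_stoneCechExtend ht
  have hTx : ∀ x, T (stoneCechUnit x) = t x := fun x =>
    congrFun (stoneCechExtend_extends ht) x
  set D₀ : Set (StoneCech X) := ((fun r => unitInterval.symm (T r)) ⁻¹' {0})ᶜ with hD₀_def
  have hD₀mem : IsCozeroSet D₀ ∧ Set.range (stoneCechUnit : X → StoneCech X) ⊆ D₀ := by
    constructor
    · exact ⟨fun r => unitInterval.symm (T r), unitInterval.continuous_symm.comp hTc, rfl⟩
    · rintro _ ⟨x, rfl⟩
      simp only [hD₀_def, mem_compl_iff, mem_preimage, mem_singleton_iff]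
      intro h
      have h2 : ((unitInterval.symm (T (stoneCechUnit x)) : ℝ)) = 0 := by rw [h]; rfl
      rw [hTx x, unitInterval.coe_symm_eq] at h2
      have h3 : ((t x : ℝ)) < 1 := (div_lt_one (hpos x)).mpr (by linarith [abs_nonneg (G x)])
      have : ((t x : ℝ)) = 1 := by linarith
      linarith
  set K := closure (stoneCechUnit '' C) with hK_def
  have hKcomp : IsCompact K := isClosed_closure.isCompact
  have hKne : K.Nonempty := (hne.image _).closure
  obtain ⟨q₀, hq₀K, hq₀max⟩ := hKcomp.exists_isMaxOn hKne
    ((continuous_subtype_val.comp hTc).continuousOn)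
  set c : ℝ := (T q₀ : ℝ) with hc_def
  have hc0 : 0 ≤ c := (T q₀).2.1
  have hc1 : c < 1 := by
    have hq₀W : q₀ ∈ W := hK hq₀K
    have hq₀D : q₀ ∈ D₀ := by
      have := hW hq₀W
      exact mem_iInter₂.mp this D₀ hD₀mem
    simp only [hD₀_def, mem_compl_iff, mem_preimage, mem_singleton_iff] at hq₀D
    have hne0 : ((unitInterval.symm (T q₀) : ℝ)) ≠ 0 := by
      intro h
      exact hq₀D (Subtype.ext (by rw [h]; rfl))
    rw [unitInterval.coe_symm_eq] at hne0
    have := (T q₀).2.2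
    rcases lt_or_eq_of_le this with h | h
    · exact h
    · exact absurd (by rw [h]; ring) hne0
  refine ⟨c / (1 - c), fun x hx => ?_⟩
  have hxK : stoneCechUnit x ∈ K := subset_closure (mem_image_of_mem _ hx)
  have h1 : ((t x : ℝ)) ≤ c := by
    have h0 : (Subtype.val ∘ T) (stoneCechUnit x) ≤ (Subtype.val ∘ T) q₀ := hq₀max hxK
    rwa [Function.comp_apply, hTx x] at h0
  have h2 : |G x| / (1 + |G x|) ≤ c := h1
  have h3 : |G x| ≤ c * (1 + |G x|) := (div_le_iff₀ (hpos x)).mp h2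
  rw [le_div_iff₀ (by linarith)]
  nlinarith

/-- For a Tychonoff space `X`, if `P` is pseudocompactness then
`λ_P X = int_{βX}(υX)`, where `υX` — the Hewitt realcompactification of `X` — is the
intersection of all cozero-sets of `βX` containing `X`. -/
theorem stmt6 {X : Type u} [TopologicalSpace X] [T35Space X] :
    lambdaP Pseudocompact X =
      interior (⋂ C ∈ {C : Set (StoneCech X) |
        IsCozeroSet C ∧ Set.range (stoneCechUnit : X → StoneCech X) ⊆ C}, C) := by
  apply Subset.antisymm
  · -- forward
    apply interior_maximal
    · rintro q hq
      simp only [lambdaP, mem_iUnion, exists_prop] at hq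
      obtain ⟨C, ⟨hCcz, hCP⟩, hqC⟩ := hq
      rcases C.eq_empty_or_nonempty with rfl | hCne
      · simp at hqC
      rw [mem_iInter₂]
      rintro D ⟨⟨F, hFc, hFeq⟩, hFr⟩
      have hFpos : ∀ x : X, (0:ℝ) < F (stoneCechUnit x) := by
        intro x
        have hx : stoneCechUnit x ∈ D := hFr (mem_range_self x)
        rw [hFeq] at hx
        simp only [mem_compl_iff, mem_preimage, mem_singleton_iff] at hx
        have h0 : (0:ℝ) ≤ F (stoneCechUnit x) := (F (stoneCechUnit x)).2.1
        rcases h0.lt_or_eq with h | h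
        · exact h
        · exact absurd (Subtype.ext h.symm) hx
      set h : (closure C) → ℝ := fun z => 1 / (F (stoneCechUnit z.val) : ℝ) with hh
      have hhc : Continuous h := continuous_const.div
        ((continuous_subtype_val.comp hFc).comp
          (continuous_stoneCechUnit.comp continuous_subtype_val))
        fun z => (hFpos z.val).ne'
      obtain ⟨M, hM⟩ := hCP h hhc
      have hM1 : (1:ℝ) ≤ M := by
        obtain ⟨x, hx⟩ := hCne
        have hz := hM ⟨x, subset_closure hx⟩
        have ht1 : (F (stoneCechUnit x) : ℝ) ≤ 1 := (F (stoneCechUnit x)).2.2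
        have := hFpos x
        rw [abs_of_pos (by positivity)] at hz
        have h1 : (1:ℝ) ≤ 1 / (F (stoneCechUnit x) : ℝ) := by
          rw [le_div_iff₀ this]; linarith
        linarith
      have hMpos : (0:ℝ) < M := by linarith
      have hclaim : ∀ x ∈ closure C, 1 / M ≤ (F (stoneCechUnit x) : ℝ) := by
        intro x hx
        have hz := hM ⟨x, hx⟩
        have hp := hFpos x
        rw [abs_of_pos (by positivity)] at hz
        rw [div_le_iff₀ hp] at hz
        rw [div_le_iff₀ hMpos]
        linarith [mul_comm M (F (stoneCechUnit x) : ℝ)]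
      have hsub : closure (stoneCechUnit '' C) ⊆ {r | 1 / M ≤ (F r : ℝ)} := by
        apply closure_minimal
        · rintro _ ⟨x, hx, rfl⟩
          exact hclaim x (subset_closure hx)
        · exact isClosed_le continuous_const (continuous_subtype_val.comp hFc)
      have hq2 : 1 / M ≤ (F q : ℝ) := hsub (interior_subset hqC)
      rw [hFeq]
      simp only [mem_compl_iff, mem_preimage, mem_singleton_iff]
      intro h0
      rw [h0] at hq2
      simp only [Icc.coe_zero] at hq2
      have : (0:ℝ) < 1 / M := by positivity
      linarith
    · exact isOpen_iUnion fun C => isOpen_iUnion fun _ => isOpen_interior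
  · -- reverse
    rintro p hp
    set W := interior (⋂ C ∈ {C : Set (StoneCech X) |
        IsCozeroSet C ∧ Set.range (stoneCechUnit : X → StoneCech X) ⊆ C}, C) with hW_def
    obtain ⟨F, hF0, hF1, hF01⟩ := exists_continuous_zero_one_of_isClosed
      (isOpen_interior.isClosed_compl (s := W)) (isClosed_singleton (x := p))
      (disjoint_singleton_right.mpr (by simpa using hp))
    have hFp : F p = 1 := hF1 rfl
    set f : X → ℝ := fun x => F (stoneCechUnit x) with hf_def
    have hfc : Continuous f := F.continuous.comp continuous_stoneCechUnit
    set C : Set X := {x | 1/2 < f x} with hC_def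
    have hCopen : IsOpen C := isOpen_lt continuous_const hfc
    have hCcz : IsCozeroSet C := by
      refine ⟨fun x => ⟨max (f x - 1/2) 0, le_max_right _ _, ?_⟩, ?_, ?_⟩
      · have := (hF01 (stoneCechUnit x)).2
        apply max_le (by simpa [hf_def] using by linarith) (by norm_num)
      · exact Continuous.subtype_mk ((hfc.sub continuous_const).max continuous_const) _
      · ext x
        simp only [hC_def, mem_setOf_eq, mem_compl_iff, mem_preimage, mem_singleton_iff,
          Subtype.ext_iff, Icc.coe_zero]
        show 1/2 < f x ↔ ¬ (max (f x - 1/2) 0 = (0:ℝ))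
        rw [max_eq_right_iff]
        constructor
        · intro h hle
          linarith
        · intro h
          by_contra hle
          push_neg at hle
          exact h (by linarith)
    have hKsub : closure (stoneCechUnit '' C) ⊆ W := by
      have h1 : closure (stoneCechUnit '' C) ⊆ {r | 1/2 ≤ F r} := by
        apply closure_minimal
        · rintro _ ⟨x, hx, rfl⟩
          exact le_of_lt (show 1/2 < F (stoneCechUnit x) from hx)
        · exact isClosed_le continuous_const F.continuous
      intro r hr
      by_contra hrW
      have : F r = 0 := hF0 hrW
      have := h1 hr
      simp only [mem_setOf_eq] at this
      rw [‹F r = 0›] at this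
      norm_num at this
    have hCP : Pseudocompact (closure C) := by
      exact pseudo_of_rel hCopen (fun G hGc => rel_bound interior_subset hKsub G hGc)
    have hmem : p ∈ interior (closure (stoneCechUnit '' C)) := by
      set O : Set (StoneCech X) := {r | 1/2 < F r} with hO_def
      have hOopen : IsOpen O := isOpen_lt continuous_const F.continuous
      have hpO : p ∈ O := by simp only [hO_def, mem_setOf_eq, hFp]; norm_num
      have hOsub : O ⊆ closure (stoneCechUnit '' C) := by
        intro r hr
        have h1 : O ⊆ closure (O ∩ Set.range (stoneCechUnit : X → StoneCech X)) :=
          denseRange_stoneCechUnit.open_subset_closure_inter hOopen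
        refine closure_mono ?_ (h1 hr)
        rintro _ ⟨hrO, x, rfl⟩
        exact ⟨x, hrO, rfl⟩
      exact interior_maximal hOsub hOopen hpO
    exact mem_iUnion₂.mpr ⟨C, ⟨hCcz, hCP⟩, hmem⟩
end

section
/- Let X be a Tychonoff space and let P be a closed hereditary topological property that is preserved under finite closed sums of subspaces. If A is a subset of X with cl_{βX} A ⊆ λ_P X, then cl_X A has P. -/
open Set Topology Filter

universe u

variable {X : Type u} [TopologicalSpace X]

/-- Swapping nested subtypes is a homeomorphism. -/
def subSwap {X : Type u} [TopologicalSpace X] (s t : Set X) :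
    (Subtype.val ⁻¹' t : Set s) ≃ₜ (Subtype.val ⁻¹' s : Set t) where
  toFun p := ⟨⟨p.1.1, p.2⟩, p.1.2⟩
  invFun p := ⟨⟨p.1.1, p.2⟩, p.1.2⟩
  left_inv p := rfl
  right_inv p := rfl
  continuous_toFun := by
    apply Continuous.subtype_mk
    exact Continuous.subtype_mk (continuous_subtype_val.comp continuous_subtype_val) _
  continuous_invFun := by
    apply Continuous.subtype_mk
    exact Continuous.subtype_mk (continuous_subtype_val.comp continuous_subtype_val) _

lemma mem_closure_iff_stoneCechUnit {X : Type u} [TopologicalSpace X] [T35Space X]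
    (s : Set X) (x : X) :
    x ∈ closure s ↔ stoneCechUnit x ∈ closure (stoneCechUnit '' s) := by
  constructor
  · intro hx
    have : stoneCechUnit x ∈ stoneCechUnit '' closure s := mem_image_of_mem _ hx
    have h2 : stoneCechUnit '' closure s ⊆ closure (stoneCechUnit '' s) :=
      (image_closure_subset_closure_image continuous_stoneCechUnit)
    exact h2 this
  · intro hx
    by_contra hxn
    obtain ⟨f, fc, fx0, fK⟩ :=
      CompletelyRegularSpace.completely_regular x (closure s) isClosed_closure hxn
    have hgc : Continuous (stoneCechExtend fc) := continuous_stoneCechExtend fc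
    have hext : ∀ y : X, stoneCechExtend fc (stoneCechUnit y) = f y := fun y =>
      congrFun (stoneCechExtend_extends fc) y
    have hcl : closure (stoneCechUnit '' s) ⊆ (stoneCechExtend fc) ⁻¹' {1} := by
      apply closure_minimal _ (isClosed_singleton.preimage hgc)
      rintro _ ⟨y, hy, rfl⟩
      simp only [mem_preimage, mem_singleton_iff, hext y]
      exact fK (subset_closure hy)
    have h1 : stoneCechExtend fc (stoneCechUnit x) = 1 := hcl hx
    rw [hext x, fx0] at h1
    exact zero_ne_one h1

/-- Let `X` be a Tychonoff space and `P` a closed hereditary topological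
property preserved under finite closed sums of subspaces.  If `A ⊆ X` satisfies
`cl_{βX} A ⊆ λ_P X`, then `cl_X A` has `P`. -/
theorem stmt7 {X : Type u} [TopologicalSpace X] [T35Space X]
    (P : (Z : Type u) → [TopologicalSpace Z] → Prop)
    (hProp : TopProperty P) (hHer : ClosedHereditary P) (hSum : FiniteClosedSums P)
    (A : Set X) (hA : closure (stoneCechUnit '' A) ⊆ lambdaP P X) :
    P (closure A) := by
  classical
  have hK : IsCompact (closure (stoneCechUnit '' A)) := isClosed_closure.isCompact
  rw [lambdaP] at hA
  obtain ⟨b', hb's, hb'fin, hcov⟩ := hK.elim_finite_subcover_image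
    (fun C _ => isOpen_interior) hA
  set T : Finset (Set X) := hb'fin.toFinset with hT
  have hmemT : ∀ C : Set X, C ∈ T ↔ C ∈ b' := fun C => hb'fin.mem_toFinset
  let e : Fin T.card ≃ {C // C ∈ T} := T.equivFin.symm
  let F : Fin T.card → Set (closure A) :=
    fun i => (Subtype.val : closure A → X) ⁻¹' closure ((e i : Set X))
  have hFclosed : ∀ i, IsClosed (F i) := fun i =>
    isClosed_closure.preimage continuous_subtype_val
  have hFP : ∀ i, P (F i) := by
    intro i
    set C : Set X := (e i : Set X) with hC
    have hCmem : C ∈ b' := (hmemT C).1 (e i).2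
    have hPC : P (closure C) := (hb's hCmem).2
    have hclosed : IsClosed ((Subtype.val : closure C → X) ⁻¹' closure A) :=
      isClosed_closure.preimage continuous_subtype_val
    have hP2 := hHer _ hPC _ hclosed
    exact hProp _ _ (subSwap (closure C) (closure A)) hP2
  have hUnion : (⋃ i, F i) = univ := by
    ext z
    simp only [mem_iUnion, mem_univ, iff_true]
    have hz : stoneCechUnit (z : X) ∈ closure (stoneCechUnit '' A) :=
      (mem_closure_iff_stoneCechUnit A (z : X)).1 z.2
    have := hcov hz
    rw [mem_iUnion₂] at this
    obtain ⟨C, hCb', hCmem⟩ := this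
    refine ⟨e.symm ⟨C, (hmemT C).2 hCb'⟩, ?_⟩
    have hCmem' : stoneCechUnit (z : X) ∈ closure (stoneCechUnit '' C) :=
      interior_subset hCmem
    have hzC : (z : X) ∈ closure C := (mem_closure_iff_stoneCechUnit C (z : X)).2 hCmem'
    simpa only [F, mem_preimage, Equiv.apply_symm_apply] using hzC
  exact hSum _ T.card F hFclosed hFP hUnion
end

section
/- Let X be a Tychonoff space and let P be a closed hereditary topological property. Then X ⊆ λ_P X if and only if X is locally-P. -/
open Set Topology Filter

universe u

variable {X : Type u} [TopologicalSpace X]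

/-- Homeomorphism between a subset of a subspace and the corresponding subset. -/
def subsetHomeo {Z : Type u} [TopologicalSpace Z] {t s : Set Z} (h : s ⊆ t) :
    (Subtype.val ⁻¹' s : Set ↥t) ≃ₜ ↥s where
  toFun := fun p => ⟨p.1.1, p.2⟩
  invFun := fun p => ⟨⟨p.1, h p.2⟩, p.2⟩
  left_inv := fun p => rfl
  right_inv := fun p => rfl
  continuous_toFun :=
    (continuous_subtype_val.comp continuous_subtype_val).subtype_mk _
  continuous_invFun := (continuous_subtype_val.subtype_mk _).subtype_mk _

/-- If `P` holds of a closure and `s ⊆ closure t`, wait... -/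
lemma P_of_closed_subset {P : (Z : Type u) → [TopologicalSpace Z] → Prop}
    (hProp : TopProperty P) (hHer : ClosedHereditary P)
    {Z : Type u} [TopologicalSpace Z] {s t : Set Z} (hs : IsClosed s) (hst : s ⊆ t)
    (hP : P t) : P s := by
  have h1 : P (Subtype.val ⁻¹' s : Set ↥t) :=
    hHer _ hP _ (hs.preimage continuous_subtype_val)
  exact hProp _ _ (subsetHomeo hst) h1

lemma not_mem_closure_image {X : Type u} [TopologicalSpace X] [T35Space X]
    {C : Set X} {x : X} (hx : x ∉ closure C) :
    stoneCechUnit x ∉ closure (stoneCechUnit '' C : Set (StoneCech X)) := by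
  obtain ⟨f, hf, hfx, hfK⟩ :=
    CompletelyRegularSpace.completely_regular x (closure C) isClosed_closure hx
  intro hmem
  have hext := stoneCechExtend_extends hf
  have h1 : EqOn (stoneCechExtend hf) 1 (closure (stoneCechUnit '' C)) := by
    apply Set.EqOn.closure _ (continuous_stoneCechExtend hf) continuous_const
    rintro _ ⟨y, hy, rfl⟩
    have := congrFun hext y
    simp only [Function.comp_apply] at this
    rw [this]
    exact hfK (subset_closure hy)
  have h0 : stoneCechExtend hf (stoneCechUnit x) = 0 := by
    have := congrFun hext x
    simp only [Function.comp_apply] at this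
    rw [this, hfx]
  have := h1 hmem
  rw [h0] at this
  exact zero_ne_one this

/-- Let `X` be a Tychonoff space and `P` a closed hereditary topological
property.  Then `X ⊆ λ_P X` if and only if `X` is locally-P. -/
theorem stmt8 {X : Type u} [TopologicalSpace X] [T35Space X]
    (P : (Z : Type u) → [TopologicalSpace Z] → Prop)
    (hProp : TopProperty P) (hHer : ClosedHereditary P) :
    Set.range (stoneCechUnit : X → StoneCech X) ⊆ lambdaP P X ↔ LocallyP P X := by
  constructor
  · intro h x
    have hx : stoneCechUnit x ∈ lambdaP P X := h ⟨x, rfl⟩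
    simp only [lambdaP, mem_iUnion, mem_setOf_eq, exists_prop] at hx
    obtain ⟨C, ⟨hCoz, hPC⟩, hxC⟩ := hx
    refine ⟨stoneCechUnit ⁻¹' (interior (closure (stoneCechUnit '' C))),
      isOpen_interior.preimage continuous_stoneCechUnit, hxC, ?_⟩
    have hsub : stoneCechUnit ⁻¹' (interior (closure (stoneCechUnit '' C))) ⊆ closure C := by
      intro y hy
      by_contra hyc
      exact not_mem_closure_image hyc (interior_subset hy)
    exact P_of_closed_subset hProp hHer isClosed_closure
      ((isClosed_closure.closure_subset_iff).mpr hsub) hPC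
  · intro h
    rintro _ ⟨x, rfl⟩
    obtain ⟨U, hUopen, hxU, hPU⟩ := h x
    obtain ⟨f, hf, hfx, hfK⟩ :=
      CompletelyRegularSpace.completely_regular x Uᶜ hUopen.isClosed_compl
        (by simpa using hxU)
    set g : X → unitInterval := unitInterval.symm ∘ f with hg_def
    have hg : Continuous g := unitInterval.continuous_symm.comp hf
    have hgx : g x = 1 := by simp [hg_def, hfx]
    have hgU : ∀ y, y ∉ U → g y = 0 := by
      intro y hy
      have := hfK (mem_compl hy)
      simp only [Pi.one_apply] at this
      simp [hg_def, this]
    set C : Set X := (g ⁻¹' {0})ᶜ with hC_def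
    have hCoz : IsCozeroSet C := ⟨g, hg, rfl⟩
    have hCU : C ⊆ U := by
      intro y hy
      by_contra hyn
      exact hy (hgU y hyn)
    have hPC : P (closure C) :=
      P_of_closed_subset hProp hHer isClosed_closure
        (closure_mono hCU) hPU
    -- membership in interior
    set gt := stoneCechExtend hg with hgt_def
    have hgtc : Continuous gt := continuous_stoneCechExtend hg
    set W : Set (StoneCech X) := gt ⁻¹' ((↑) ⁻¹' Set.Ioi (1/2 : ℝ)) with hW_def
    have hWopen : IsOpen W := (isOpen_Ioi.preimage continuous_subtype_val).preimage hgtc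
    have hxW : stoneCechUnit x ∈ W := by
      have h2 : gt (stoneCechUnit x) = g x := congrFun (stoneCechExtend_extends hg) x
      simp only [hW_def, mem_preimage, h2, hgx]
      norm_num
    have hWsub : W ⊆ closure (stoneCechUnit '' C) := by
      have h1 : W ⊆ closure (W ∩ range stoneCechUnit) :=
        denseRange_stoneCechUnit.open_subset_closure_inter hWopen
      refine h1.trans (closure_mono ?_)
      rintro _ ⟨hw, y, rfl⟩
      refine ⟨y, ?_, rfl⟩
      have h2 : gt (stoneCechUnit y) = g y := congrFun (stoneCechExtend_extends hg) y
      simp only [hW_def, mem_preimage, h2] at hw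
      intro h0
      rw [mem_preimage, mem_singleton_iff] at h0
      rw [h0] at hw
      norm_num at hw
    have : stoneCechUnit x ∈ interior (closure (stoneCechUnit '' C)) :=
      interior_maximal hWsub hWopen hxW
    simp only [lambdaP, mem_iUnion, mem_setOf_eq, exists_prop]
    exact ⟨C, ⟨hCoz, hPC⟩, this⟩
end
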